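/- arXiv:1005.5536 — 7 statements merged into one kernel-verified Lean document; each statement's English description precedes it below -/
import Mathlib

section
/- The integral over ξ from 0 to ∞ of (∫_ξ^∞ e^{-η²} dη · ∫_0^ξ e^{-η²} dη) / (ξ e^{-ξ²}) equals Catalan's constant, i.e. (4/√π) ∫_0^∞ [∫_ξ^∞ e^{-η²} dη · ∫_0^ξ e^{-η²} dη] / (ξ e^{-ξ²}) dξ = (4/√π) · G, where G = ∑_{n≥0} (-1)^n/(2n+1)² is Catalan's constant. -/
open Real MeasureTheory Set Filter

/-- The Catalan constant `G = ∑ (-1)^n / (2n+1)²`. -/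
noncomputable def catalanConstant : ℝ := ∑' n : ℕ, (-1) ^ n / (2 * (n : ℝ) + 1) ^ 2

namespace CatalanAux

lemma hE : Integrable (fun x:ℝ => Real.exp (-x^2)) := by
  have := integrable_exp_neg_mul_sq (b := (1:ℝ)) one_pos
  simpa using this

lemma xexp_int (c : ℝ) (hc : 0 < c) : ∫ x in Ioi (0:ℝ), x * Real.exp (-c * x ^ 2) = (2*c)⁻¹ := by
  have hderiv : ∀ x ∈ Ici (0:ℝ), HasDerivAt (fun x:ℝ => -(2*c)⁻¹ * Real.exp (-c * x^2))
      (x * Real.exp (-c * x^2)) x := by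
    intro x _
    have := ((hasDerivAt_pow 2 x).const_mul (-c)).exp.const_mul (-(2*c)⁻¹)
    refine this.congr_deriv ?_
    field_simp; ring
  have hint : IntegrableOn (fun x:ℝ => x * Real.exp (-c*x^2)) (Ioi 0) :=
    (integrable_mul_exp_neg_mul_sq hc).integrableOn
  have htend : Tendsto (fun x:ℝ => -(2*c)⁻¹ * Real.exp (-c * x^2)) atTop (nhds 0) := by
    rw [show (0:ℝ) = -(2*c)⁻¹ * 0 by ring]
    refine Tendsto.const_mul _ ?_
    refine Real.tendsto_exp_atBot.comp ?_
    simp_rw [show ∀ x:ℝ, -c * x^2 = -(c * x^2) from fun x => by ring]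
    exact tendsto_neg_atBot_iff.mpr ((tendsto_pow_atTop (by norm_num)).const_mul_atTop hc)
  have := integral_Ioi_of_hasDerivAt_of_tendsto' hderiv hint htend
  rw [this]; simp

lemma pow_int (n : ℕ) : ∫ x in Ioo (0:ℝ) 1, x ^ (2*n) = 1/(2*(n:ℝ)+1) := by
  rw [← integral_Ioc_eq_integral_Ioo, ← intervalIntegral.integral_of_le zero_le_one,
    integral_pow]
  push_cast; norm_num

lemma lint_pow (n : ℕ) : ∫⁻ x in Ioo (0:ℝ) 1, ‖(-1:ℝ) ^ n * x ^ (2*n) / (2*(n:ℝ)+1)‖₊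
    = ENNReal.ofReal (1/(2*(n:ℝ)+1)^2) := by
  have h1 : ∀ x ∈ Ioo (0:ℝ) 1, ‖(-1:ℝ) ^ n * x ^ (2*n) / (2*(n:ℝ)+1)‖ =
      x ^ (2*n) / (2*(n:ℝ)+1) := by
    intro x hx
    rw [norm_eq_abs, abs_div, abs_mul, abs_pow, abs_pow, abs_neg, abs_one, one_pow, one_mul,
      abs_of_pos hx.1, abs_of_pos (by positivity)]
  have heq : ∫⁻ x in Ioo (0:ℝ) 1, ‖(-1:ℝ) ^ n * x ^ (2*n) / (2*(n:ℝ)+1)‖₊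
      = ∫⁻ x in Ioo (0:ℝ) 1, ENNReal.ofReal (x ^ (2*n) / (2*(n:ℝ)+1)) := by
    refine setLIntegral_congr_fun measurableSet_Ioo (fun x hx => ?_)
    rw [← enorm_eq_nnnorm, ← ofReal_norm, h1 x hx]
  rw [heq]
  have hint : IntegrableOn (fun x:ℝ => x ^ (2*n) / (2*(n:ℝ)+1)) (Ioo 0 1) := by
    have : IntegrableOn (fun x:ℝ => x ^ (2*n) / (2*(n:ℝ)+1)) (Icc 0 1) :=
      (Continuous.continuousOn (by continuity)).integrableOn_compact isCompact_Icc
    exact this.mono_set Ioo_subset_Icc_self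
  rw [← ofReal_integral_eq_lintegral_ofReal hint
    (Filter.Eventually.of_forall fun x => div_nonneg ((even_two_mul n).pow_nonneg x) (by positivity))]
  congr 1
  rw [show (fun x:ℝ => x ^ (2*n) / (2*(n:ℝ)+1)) = fun x:ℝ => (1/(2*(n:ℝ)+1)) * x ^ (2*n) by
    ext x; ring]
  rw [integral_const_mul, pow_int]
  rw [pow_two]
  field_simp

lemma catalan_int : ∫ x in Ioo (0:ℝ) 1, Real.arctan x / x = catalanConstant := by
  have hmeas : ∀ n : ℕ, AEStronglyMeasurable (fun x:ℝ => (-1:ℝ)^n * x^(2*n) / (2*(n:ℝ)+1))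
      (volume.restrict (Ioo (0:ℝ) 1)) := by
    intro n; exact (Continuous.aestronglyMeasurable (by continuity))
  have hsum : Summable (fun n : ℕ => 1/(2*(n:ℝ)+1)^2) := by
    have hg : Summable (fun n : ℕ => 1/((n:ℝ)+1)^2) := by
      have := Real.summable_one_div_nat_pow.mpr one_lt_two
      exact_mod_cast (summable_nat_add_iff 1).mpr this
    refine hg.of_nonneg_of_le (fun n => by positivity) (fun n => ?_)
    apply div_le_div_of_nonneg_left one_pos.le (by positivity)
    apply pow_le_pow_left₀ (by positivity)
    linarith [Nat.cast_nonneg (α := ℝ) n]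
  have hlint : ∑' n : ℕ, ∫⁻ x in Ioo (0:ℝ) 1, ‖(-1:ℝ)^n * x^(2*n) / (2*(n:ℝ)+1)‖₊ ≠ ⊤ := by
    simp_rw [lint_pow]
    rw [← ENNReal.ofReal_tsum_of_nonneg (fun n => by positivity) hsum]
    exact ENNReal.ofReal_ne_top
  have key := integral_tsum hmeas hlint
  have hpt : ∀ᵐ x ∂(volume.restrict (Ioo (0:ℝ) 1)),
      Real.arctan x / x = ∑' n : ℕ, (-1:ℝ)^n * x^(2*n) / (2*(n:ℝ)+1) := by
    filter_upwards [ae_restrict_mem measurableSet_Ioo] with x hx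
    have hx1 : ‖x‖ < 1 := by rw [norm_eq_abs, abs_of_pos hx.1]; exact hx.2
    have := (Real.hasSum_arctan hx1).div_const x
    rw [← this.tsum_eq]
    congr 1; ext n
    have hxne : x ≠ 0 := ne_of_gt hx.1
    push_cast
    rw [pow_succ]
    field_simp
  rw [integral_congr_ae hpt, key]
  unfold catalanConstant
  congr 1; ext n
  have : ∫ x in Ioo (0:ℝ) 1, (-1:ℝ)^n * x^(2*n) / (2*(n:ℝ)+1)
      = ((-1:ℝ)^n / (2*(n:ℝ)+1)) * ∫ x in Ioo (0:ℝ) 1, x^(2*n) := by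
    rw [← integral_const_mul]; congr 1; ext x; ring
  rw [this, pow_int]
  rw [pow_two]
  field_simp

lemma s_int {x : ℝ} (hx : x ∈ Ioo (0:ℝ) 1) :
    ∫ s in Ioo (0:ℝ) 1, (1-x^2)/((1-x^2)^2 + 4*x^2*s^2) = Real.arctan x / x := by
  obtain ⟨hx0, hx1⟩ := hx
  have hd : (0:ℝ) < 1 - x^2 := by nlinarith
  have hcont : Continuous (fun s:ℝ => (1-x^2)/((1-x^2)^2 + 4*x^2*s^2)) := by
    apply continuous_const.div (by continuity)
    intro s; positivity
  have hderiv : ∀ s ∈ uIcc (0:ℝ) 1,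
      HasDerivAt (fun s:ℝ => (1/(2*x)) * Real.arctan (2*x/(1-x^2)*s))
        ((1-x^2)/((1-x^2)^2 + 4*x^2*s^2)) s := by
    intro s _
    have h1 : HasDerivAt (fun s:ℝ => 2*x/(1-x^2)*s) (2*x/(1-x^2)) s := by
      simpa using (hasDerivAt_id s).const_mul (2*x/(1-x^2))
    have h2 := (Real.hasDerivAt_arctan (2*x/(1-x^2)*s)).comp s h1
    have h3 := h2.const_mul (1/(2*x))
    refine h3.congr_deriv ?_
    field_simp
    ring
  rw [← integral_Ioc_eq_integral_Ioo, ← intervalIntegral.integral_of_le zero_le_one,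
    intervalIntegral.integral_eq_sub_of_hasDerivAt hderiv
      (hcont.intervalIntegrable 0 1)]
  have harc : Real.arctan (2*x/(1-x^2)) = 2 * Real.arctan x := by
    have h := Real.arctan_add (x := x) (y := x) (by nlinarith)
    rw [show 2*x/(1-x^2) = (x+x)/(1-x*x) by ring_nf, ← h]
    ring
  simp only [mul_one, mul_zero, Real.arctan_zero]
  rw [harc]
  field_simp
  ring

lemma img3 : (fun x:ℝ => 2*x/(1+x^2)) '' Ioo 0 1 = Ioo 0 1 := by
  apply Subset.antisymm
  · rintro _ ⟨x, ⟨hx0, hx1⟩, rfl⟩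
    constructor
    · positivity
    · rw [div_lt_one (by positivity)]; nlinarith
  · have hc : Continuous fun x:ℝ => 2*x/(1+x^2) :=
      (continuous_const.mul continuous_id).div (by continuity) (fun x => by positivity)
    have h := intermediate_value_Ioo (f := fun x:ℝ => 2*x/(1+x^2)) zero_le_one hc.continuousOn
    norm_num at h
    exact h

lemma inj3 : InjOn (fun x:ℝ => 2*x/(1+x^2)) (Ioo 0 1) := by
  rintro a ⟨ha0, ha1⟩ b ⟨hb0, hb1⟩ hab
  simp only at hab
  rw [div_eq_div_iff (by positivity) (by positivity)] at hab
  have hab1 : a * b < 1 := by nlinarith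
  have h5 : (a - b) * (1 - a*b) = 0 := by linear_combination hab / 2
  rcases mul_eq_zero.mp h5 with h | h
  · linarith
  · nlinarith

lemma u_sub (s : ℝ) :
    ∫ u in Ioo (0:ℝ) 1, 1/(2*(1 - u^2*(1-s^2)))
      = ∫ x in Ioo (0:ℝ) 1, (1-x^2)/((1-x^2)^2 + 4*x^2*s^2) := by
  have hderiv : ∀ x ∈ Ioo (0:ℝ) 1, HasDerivWithinAt (fun x:ℝ => 2*x/(1+x^2))
      (2*(1-x^2)/(1+x^2)^2) (Ioo 0 1) x := by
    intro x _
    apply HasDerivAt.hasDerivWithinAt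
    have h1 : HasDerivAt (fun x:ℝ => 2*x) 2 x := by simpa using (hasDerivAt_id x).const_mul 2
    have h2 : HasDerivAt (fun x:ℝ => 1+x^2) (2*x) x := by
      simpa using (hasDerivAt_pow 2 x).const_add 1
    have := h1.div h2 (by positivity)
    refine this.congr_deriv ?_
    field_simp
    ring
  have key := integral_image_eq_integral_abs_deriv_smul measurableSet_Ioo hderiv inj3
    (fun u => 1/(2*(1 - u^2*(1-s^2))))
  rw [img3] at key
  rw [key]
  apply setIntegral_congr_fun measurableSet_Ioo
  intro x ⟨hx0, hx1⟩
  have h2 : (0:ℝ) < 1 - x^2 := by nlinarith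
  have h3 : (0:ℝ) < 1 + x^2 := by positivity
  simp only [smul_eq_mul]
  rw [abs_of_pos (by positivity)]
  rw [show 1 - (2*x/(1+x^2))^2*(1-s^2) = ((1-x^2)^2 + 4*x^2*s^2)/(1+x^2)^2 by
    field_simp; ring]
  have h4 : (0:ℝ) < (1-x^2)^2 + 4*x^2*s^2 := by positivity
  field_simp

lemma imgC {ξ : ℝ} (hξ : 0 < ξ) : (fun u:ℝ => ξ/u) '' Ioo 0 1 = Ioi ξ := by
  apply Subset.antisymm
  · rintro _ ⟨u, ⟨hu0, hu1⟩, rfl⟩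
    simp only [mem_Ioi]
    rw [lt_div_iff₀ hu0]
    nlinarith
  · rintro y hy
    have hy0 : 0 < y := hξ.trans hy
    refine ⟨ξ/y, ⟨by positivity, by rwa [div_lt_one hy0]⟩, ?_⟩
    field_simp

lemma F_eq {ξ : ℝ} (hξ : 0 < ξ) :
    (∫ η in (0:ℝ)..ξ, Real.exp (-η^2)) = ∫ u in Ioo (0:ℝ) 1, ξ * Real.exp (-(ξ*u)^2) := by
  have himg : (fun u:ℝ => ξ*u) '' Ioo 0 1 = Ioo 0 ξ := by
    rw [image_mul_left_Ioo hξ]; norm_num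
  have hderiv : ∀ u ∈ Ioo (0:ℝ) 1, HasDerivWithinAt (fun u:ℝ => ξ*u) ξ (Ioo 0 1) u :=
    fun u _ => (HasDerivAt.hasDerivWithinAt (by simpa using (hasDerivAt_id u).const_mul ξ))
  have hinj : InjOn (fun u:ℝ => ξ*u) (Ioo 0 1) :=
    fun a _ b _ h => by
      simp only at h
      exact mul_left_cancel₀ (ne_of_gt hξ) h
  have key := integral_image_eq_integral_abs_deriv_smul measurableSet_Ioo hderiv hinj
    (fun η => Real.exp (-η^2))
  rw [himg] at key
  rw [intervalIntegral.integral_of_le hξ.le, integral_Ioc_eq_integral_Ioo, key]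
  simp [abs_of_pos hξ, smul_eq_mul]

lemma C_eq {ξ : ℝ} (hξ : 0 < ξ) :
    (∫ η in Ioi ξ, Real.exp (-η^2)) = ∫ u in Ioo (0:ℝ) 1, ξ/u^2 * Real.exp (-(ξ/u)^2) := by
  have hderiv : ∀ u ∈ Ioo (0:ℝ) 1, HasDerivWithinAt (fun u:ℝ => ξ/u) (-(ξ/u^2)) (Ioo 0 1) u := by
    intro u hu
    apply HasDerivAt.hasDerivWithinAt
    have h0 := (hasDerivAt_id u).inv (ne_of_gt hu.1)
    have h1 := h0.const_mul ξ
    have : HasDerivAt (fun u:ℝ => ξ/u) (ξ * (-1 / id u ^ 2)) u := by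
      apply h1.congr_of_eventuallyEq
      filter_upwards with v
      simp [div_eq_mul_inv]
    refine this.congr_deriv ?_
    simp only [id]
    field_simp
  have hinj : InjOn (fun u:ℝ => ξ/u) (Ioo 0 1) := by
    rintro a ⟨ha0, _⟩ b ⟨hb0, _⟩ h
    simp only at h
    rw [div_eq_div_iff (ne_of_gt ha0) (ne_of_gt hb0)] at h
    exact (mul_left_cancel₀ (ne_of_gt hξ) h).symm
  have key := integral_image_eq_integral_abs_deriv_smul measurableSet_Ioo hderiv hinj
    (fun η => Real.exp (-η^2))
  rw [imgC hξ] at key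
  rw [key]
  apply setIntegral_congr_fun measurableSet_Ioo
  intro u ⟨hu0, _⟩
  simp only [smul_eq_mul]
  rw [abs_neg, abs_of_pos (by positivity)]

/-- Integrability of the pulled-back complementary error integrand. -/
lemma C_integrable {ξ : ℝ} (hξ : 0 < ξ) :
    IntegrableOn (fun u:ℝ => ξ/u^2 * Real.exp (-(ξ/u)^2)) (Ioo 0 1) := by
  have hderiv : ∀ u ∈ Ioo (0:ℝ) 1, HasDerivWithinAt (fun u:ℝ => ξ/u) (-(ξ/u^2)) (Ioo 0 1) u := by
    intro u hu
    apply HasDerivAt.hasDerivWithinAt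
    have h0 := (hasDerivAt_id u).inv (ne_of_gt hu.1)
    have h1 := h0.const_mul ξ
    have : HasDerivAt (fun u:ℝ => ξ/u) (ξ * (-1 / id u ^ 2)) u := by
      apply h1.congr_of_eventuallyEq
      filter_upwards with v
      simp [div_eq_mul_inv]
    refine this.congr_deriv ?_
    simp only [id]
    field_simp
  have hinj : InjOn (fun u:ℝ => ξ/u) (Ioo 0 1) := by
    rintro a ⟨ha0, _⟩ b ⟨hb0, _⟩ h
    simp only at h
    rw [div_eq_div_iff (ne_of_gt ha0) (ne_of_gt hb0)] at h
    exact (mul_left_cancel₀ (ne_of_gt hξ) h).symm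
  have key := (integrableOn_image_iff_integrableOn_abs_deriv_smul measurableSet_Ioo hderiv hinj
    (fun η => Real.exp (-η^2)))
  rw [imgC hξ] at key
  have hIoi : IntegrableOn (fun η:ℝ => Real.exp (-η^2)) (Ioi ξ) := hE.integrableOn
  have := key.mp hIoi
  apply this.congr_fun ?_ measurableSet_Ioo
  intro u ⟨hu0, _⟩
  simp only [smul_eq_mul]
  rw [abs_neg, abs_of_pos (by positivity)]

/-- The triple-integral kernel. -/
noncomputable def G (ξ u s : ℝ) : ℝ := ξ/u^2 * Real.exp (ξ^2 - (ξ/u)^2 - (ξ*s)^2)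

lemma hGm : Measurable (fun p : ℝ × ℝ × ℝ => ENNReal.ofReal (G p.1 p.2.1 p.2.2)) := by
  unfold G
  fun_prop

/-- Step 1: the integrand as an iterated lower integral. -/
lemma step1 {ξ : ℝ} (hξ : 0 < ξ) :
    ENNReal.ofReal (((∫ η in Ioi ξ, Real.exp (-η^2)) * ∫ η in (0:ℝ)..ξ, Real.exp (-η^2)) /
        (ξ * Real.exp (-ξ^2)))
      = ∫⁻ u in Ioo (0:ℝ) 1, ∫⁻ s in Ioo (0:ℝ) 1, ENNReal.ofReal (G ξ u s) := by
  set K : ℝ := ∫ s in Ioo (0:ℝ) 1, Real.exp (-(ξ*s)^2) with hK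
  have hK0 : 0 ≤ K := setIntegral_nonneg measurableSet_Ioo (fun s _ => (Real.exp_pos _).le)
  have hFval : (∫ η in (0:ℝ)..ξ, Real.exp (-η^2)) = ξ * K := by
    rw [F_eq hξ, hK, ← integral_const_mul]
  have hChange : ((∫ η in Ioi ξ, Real.exp (-η^2)) * ∫ η in (0:ℝ)..ξ, Real.exp (-η^2)) /
        (ξ * Real.exp (-ξ^2))
      = ∫ u in Ioo (0:ℝ) 1, (ξ/u^2 * Real.exp (-(ξ/u)^2)) * (K * Real.exp (ξ^2)) := by
    rw [hFval, C_eq hξ, integral_mul_const, Real.exp_neg]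
    have hξ' : ξ ≠ 0 := ne_of_gt hξ
    have he : Real.exp (ξ^2) ≠ 0 := (Real.exp_pos _).ne'
    field_simp
  rw [hChange]
  have hint : IntegrableOn (fun u:ℝ => (ξ/u^2 * Real.exp (-(ξ/u)^2)) * (K * Real.exp (ξ^2)))
      (Ioo 0 1) := (C_integrable hξ).mul_const _
  rw [ofReal_integral_eq_lintegral_ofReal hint ?nn]
  case nn =>
    rw [EventuallyLE, ae_restrict_iff' measurableSet_Ioo]
    filter_upwards with u hu
    have := hu.1
    positivity
  refine setLIntegral_congr_fun measurableSet_Ioo (fun u hu => ?_)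
  have hu0 : 0 < u := hu.1
  -- inner : ofReal ((ξ/u² e^{-(ξ/u)²}) (K e^{ξ²})) = ∫⁻ s, ofReal (G ξ u s)
  have hGeq : ∀ s : ℝ, (ξ/u^2 * Real.exp (-(ξ/u)^2) * Real.exp (ξ^2)) * Real.exp (-(ξ*s)^2)
      = G ξ u s := by
    intro s
    unfold G
    rw [show ξ^2 - (ξ/u)^2 - (ξ*s)^2 = (-(ξ/u)^2) + ξ^2 + (-(ξ*s)^2) by ring,
      Real.exp_add, Real.exp_add]
    ring
  have hval : (ξ/u^2 * Real.exp (-(ξ/u)^2)) * (K * Real.exp (ξ^2))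
      = ∫ s in Ioo (0:ℝ) 1, G ξ u s := by
    have : ∫ s in Ioo (0:ℝ) 1, G ξ u s
        = ∫ s in Ioo (0:ℝ) 1, (ξ/u^2 * Real.exp (-(ξ/u)^2) * Real.exp (ξ^2)) * Real.exp (-(ξ*s)^2) := by
      refine setIntegral_congr_fun measurableSet_Ioo (fun s _ => (hGeq s).symm)
    rw [this, integral_const_mul, hK]
    ring
  rw [hval]
  have hintS : IntegrableOn (fun s:ℝ => G ξ u s) (Ioo 0 1) := by
    have hc : Continuous (fun s:ℝ => G ξ u s) := by
      unfold G
      continuity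
    exact (hc.continuousOn.integrableOn_compact isCompact_Icc).mono_set Ioo_subset_Icc_self
  rw [ofReal_integral_eq_lintegral_ofReal hintS ?nn2]
  case nn2 =>
    refine Filter.Eventually.of_forall (fun s => ?_)
    unfold G
    positivity

/-- Step 2: the inner ξ-integral. -/
lemma step2 {u s : ℝ} (hu : u ∈ Ioo (0:ℝ) 1) (hs : s ∈ Ioo (0:ℝ) 1) :
    ∫⁻ ξ in Ioi (0:ℝ), ENNReal.ofReal (G ξ u s)
      = ENNReal.ofReal (1/(2*(1 - u^2*(1-s^2)))) := by
  obtain ⟨hu0, hu1⟩ := hu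
  have hD : 0 < 1 - u^2*(1-s^2) := by nlinarith [hs.1, hs.2, sq_nonneg s, sq_nonneg u]
  set c : ℝ := (1 - u^2*(1-s^2))/u^2 with hc
  have hc0 : 0 < c := by positivity
  have hGrw : ∀ ξ : ℝ, G ξ u s = (1/u^2) * (ξ * Real.exp (-c * ξ^2)) := by
    intro ξ
    unfold G
    rw [show -c * ξ^2 = ξ^2 - (ξ/u)^2 - (ξ*s)^2 by rw [hc]; field_simp; ring]
    ring
  simp_rw [hGrw]
  have hint : IntegrableOn (fun ξ:ℝ => (1/u^2) * (ξ * Real.exp (-c * ξ^2))) (Ioi 0) :=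
    ((integrable_mul_exp_neg_mul_sq hc0).const_mul _).integrableOn
  rw [← ofReal_integral_eq_lintegral_ofReal hint ?nn]
  case nn =>
    rw [EventuallyLE, ae_restrict_iff' measurableSet_Ioi]
    filter_upwards with ξ hξ
    have := le_of_lt (mem_Ioi.mp hξ)
    positivity
  rw [integral_const_mul, xexp_int c hc0]
  congr 1
  rw [hc]
  field_simp

/-- Step 3: substitution `u = 2x/(1+x²)` at the `lintegral` level. -/
lemma step3 {s : ℝ} (hs : s ∈ Ioo (0:ℝ) 1) :
    ∫⁻ u in Ioo (0:ℝ) 1, ENNReal.ofReal (1/(2*(1 - u^2*(1-s^2))))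
      = ∫⁻ x in Ioo (0:ℝ) 1, ENNReal.ofReal ((1-x^2)/((1-x^2)^2 + 4*x^2*s^2)) := by
  have hs0 := hs.1
  have hDpos : ∀ u ∈ Icc (0:ℝ) 1, 0 < 1 - u^2*(1-s^2) := by
    intro u ⟨h0, h1⟩
    have hu2 : u^2 ≤ 1 := by nlinarith
    have hs2 : 0 < s^2 := pow_pos hs0 2
    have h1s : (0:ℝ) ≤ 1 - s^2 := by nlinarith [hs.2]
    have : u^2*(1-s^2) ≤ 1*(1-s^2) := mul_le_mul_of_nonneg_right hu2 h1s
    nlinarith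
  have hint1 : IntegrableOn (fun u:ℝ => 1/(2*(1 - u^2*(1-s^2)))) (Ioo 0 1) := by
    have hcont : ContinuousOn (fun u:ℝ => 1/(2*(1 - u^2*(1-s^2)))) (Icc 0 1) := by
      apply ContinuousOn.div continuousOn_const (Continuous.continuousOn (by continuity))
      intro u hu
      have := hDpos u hu
      positivity
    exact (hcont.integrableOn_compact isCompact_Icc).mono_set Ioo_subset_Icc_self
  have hEpos : ∀ x ∈ Icc (0:ℝ) 1, 0 < (1-x^2)^2 + 4*x^2*s^2 := by
    intro x ⟨h0, h1⟩
    rcases eq_or_lt_of_le h0 with h | h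
    · subst h; norm_num
    · positivity
  have hint2 : IntegrableOn (fun x:ℝ => (1-x^2)/((1-x^2)^2 + 4*x^2*s^2)) (Ioo 0 1) := by
    have hcont : ContinuousOn (fun x:ℝ => (1-x^2)/((1-x^2)^2 + 4*x^2*s^2)) (Icc 0 1) := by
      apply ContinuousOn.div (Continuous.continuousOn (by continuity))
        (Continuous.continuousOn (by continuity))
      intro x hx
      exact ne_of_gt (hEpos x hx)
    exact (hcont.integrableOn_compact isCompact_Icc).mono_set Ioo_subset_Icc_self
  rw [← ofReal_integral_eq_lintegral_ofReal hint1 ?nn1,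
    ← ofReal_integral_eq_lintegral_ofReal hint2 ?nn2, u_sub s]
  case nn1 =>
    rw [EventuallyLE, ae_restrict_iff' measurableSet_Ioo]
    filter_upwards with u hu
    have := hDpos u (Ioo_subset_Icc_self hu)
    positivity
  case nn2 =>
    rw [EventuallyLE, ae_restrict_iff' measurableSet_Ioo]
    filter_upwards with x hx
    have h1 : (0:ℝ) ≤ 1 - x^2 := by nlinarith [hx.1, hx.2]
    have h2 := hEpos x (Ioo_subset_Icc_self hx)
    positivity

/-- Step 4: the `s`-integral at the `lintegral` level. -/
lemma step4 {x : ℝ} (hx : x ∈ Ioo (0:ℝ) 1) :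
    ∫⁻ s in Ioo (0:ℝ) 1, ENNReal.ofReal ((1-x^2)/((1-x^2)^2 + 4*x^2*s^2))
      = ENNReal.ofReal (Real.arctan x / x) := by
  have h2 : (0:ℝ) < 1 - x^2 := by nlinarith [hx.1, hx.2]
  have hint : IntegrableOn (fun s:ℝ => (1-x^2)/((1-x^2)^2 + 4*x^2*s^2)) (Ioo 0 1) := by
    have hcont : Continuous (fun s:ℝ => (1-x^2)/((1-x^2)^2 + 4*x^2*s^2)) := by
      apply continuous_const.div (by continuity)
      intro s
      positivity
    exact (hcont.continuousOn.integrableOn_compact isCompact_Icc).mono_set Ioo_subset_Icc_self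
  rw [← ofReal_integral_eq_lintegral_ofReal hint
    (Filter.Eventually.of_forall fun s => by positivity), s_int hx]

/-- Step 5: the final `x`-integral. -/
lemma arctan_nonneg' {x : ℝ} (hx : 0 ≤ x) : 0 ≤ Real.arctan x := by
  rw [← Real.arctan_zero]
  exact Real.arctan_strictMono.monotone hx

lemma step5 : ∫⁻ x in Ioo (0:ℝ) 1, ENNReal.ofReal (Real.arctan x / x)
    = ENNReal.ofReal catalanConstant := by
  have harcle : ∀ x : ℝ, 0 < x → Real.arctan x ≤ x := by
    intro x hx
    by_contra hcon
    push_neg at hcon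
    have h2 : x < π/2 := hcon.trans (Real.arctan_lt_pi_div_two x)
    have h3 := Real.lt_tan hx h2
    have h4 : Real.tan x < Real.tan (Real.arctan x) :=
      Real.tan_lt_tan_of_nonneg_of_lt_pi_div_two hx.le (Real.arctan_lt_pi_div_two x) hcon
    rw [Real.tan_arctan] at h4
    linarith
  have hint : IntegrableOn (fun x:ℝ => Real.arctan x / x) (Ioo 0 1) := by
    apply Measure.integrableOn_of_bounded (M := 1)
    · rw [Real.volume_Ioo]; exact ENNReal.ofReal_ne_top
    · exact (Real.measurable_arctan.div measurable_id).aestronglyMeasurable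
    · rw [ae_restrict_iff' measurableSet_Ioo]
      filter_upwards with x hx
      rw [norm_eq_abs, abs_of_nonneg (div_nonneg (arctan_nonneg' hx.1.le) hx.1.le)]
      rw [div_le_one hx.1]
      exact harcle x hx.1
  rw [← ofReal_integral_eq_lintegral_ofReal hint ?nn, catalan_int]
  case nn =>
    rw [EventuallyLE, ae_restrict_iff' measurableSet_Ioo]
    filter_upwards with x hx
    exact div_nonneg (arctan_nonneg' hx.1.le) hx.1.le

end CatalanAux

namespace CatalanAux

lemma main_integral :
    ∫ ξ in Ioi (0 : ℝ),
        ((∫ η in Ioi ξ, Real.exp (-η ^ 2)) * ∫ η in (0 : ℝ)..ξ, Real.exp (-η ^ 2)) /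
          (ξ * Real.exp (-ξ ^ 2)) = catalanConstant := by
  set f : ℝ → ℝ := fun ξ =>
    ((∫ η in Ioi ξ, Real.exp (-η ^ 2)) * ∫ η in (0 : ℝ)..ξ, Real.exp (-η ^ 2)) /
      (ξ * Real.exp (-ξ ^ 2)) with hf
  have hCanti : Antitone (fun ξ : ℝ => ∫ η in Ioi ξ, Real.exp (-η ^ 2)) := by
    intro a b hab
    apply setIntegral_mono_set hE.integrableOn
    · exact Filter.Eventually.of_forall (fun x => (Real.exp_pos _).le)
    · exact HasSubset.Subset.eventuallyLE (Ioi_subset_Ioi hab)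
  have hFmono : Monotone (fun ξ : ℝ => ∫ η in (0:ℝ)..ξ, Real.exp (-η ^ 2)) := by
    intro a b hab
    have hsplit : (∫ η in (0:ℝ)..a, Real.exp (-η^2)) + ∫ η in a..b, Real.exp (-η^2)
        = ∫ η in (0:ℝ)..b, Real.exp (-η^2) :=
      intervalIntegral.integral_add_adjacent_intervals hE.intervalIntegrable hE.intervalIntegrable
    have hnn : 0 ≤ ∫ η in a..b, Real.exp (-η^2) :=
      intervalIntegral.integral_nonneg hab (fun x _ => (Real.exp_pos _).le)
    simp only
    linarith
  have hmeasf : AEStronglyMeasurable f (volume.restrict (Ioi 0)) := by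
    apply Measurable.aestronglyMeasurable
    apply Measurable.div
    · exact (hCanti.measurable.mul hFmono.measurable)
    · fun_prop
  have hnnf : 0 ≤ᵐ[volume.restrict (Ioi (0:ℝ))] f := by
    rw [EventuallyLE, ae_restrict_iff' measurableSet_Ioi]
    filter_upwards with ξ hξ
    have hξ0 : (0:ℝ) < ξ := hξ
    have hC : 0 ≤ ∫ η in Ioi ξ, Real.exp (-η ^ 2) :=
      setIntegral_nonneg measurableSet_Ioi (fun x _ => (Real.exp_pos _).le)
    have hF : 0 ≤ ∫ η in (0:ℝ)..ξ, Real.exp (-η ^ 2) :=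
      intervalIntegral.integral_nonneg hξ0.le (fun x _ => (Real.exp_pos _).le)
    simp only [Pi.zero_apply, hf]
    exact div_nonneg (mul_nonneg hC hF) (by positivity)
  have hcat_nonneg : 0 ≤ catalanConstant := by
    rw [← catalan_int]
    exact setIntegral_nonneg measurableSet_Ioo
      (fun x hx => div_nonneg (arctan_nonneg' hx.1.le) hx.1.le)
  -- the lintegral computation
  have key : ∫⁻ ξ in Ioi (0:ℝ), ENNReal.ofReal (f ξ) = ENNReal.ofReal catalanConstant := by
    have e1 : ∫⁻ ξ in Ioi (0:ℝ), ENNReal.ofReal (f ξ)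
        = ∫⁻ ξ in Ioi (0:ℝ), ∫⁻ u in Ioo (0:ℝ) 1, ∫⁻ s in Ioo (0:ℝ) 1,
            ENNReal.ofReal (G ξ u s) :=
      setLIntegral_congr_fun measurableSet_Ioi
        (fun ξ hξ => step1 hξ)
    have e2 : ∫⁻ ξ in Ioi (0:ℝ), ∫⁻ u in Ioo (0:ℝ) 1, ∫⁻ s in Ioo (0:ℝ) 1,
            ENNReal.ofReal (G ξ u s)
        = ∫⁻ u in Ioo (0:ℝ) 1, ∫⁻ ξ in Ioi (0:ℝ), ∫⁻ s in Ioo (0:ℝ) 1,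
            ENNReal.ofReal (G ξ u s) := by
      apply lintegral_lintegral_swap
      apply Measurable.aemeasurable
      apply Measurable.lintegral_prod_right (f := fun (p : ℝ × ℝ) s => ENNReal.ofReal (G p.1 p.2 s))
      exact hGm.comp (by fun_prop : Measurable fun q : (ℝ × ℝ) × ℝ => (q.1.1, q.1.2, q.2))
    have e3 : ∫⁻ u in Ioo (0:ℝ) 1, ∫⁻ ξ in Ioi (0:ℝ), ∫⁻ s in Ioo (0:ℝ) 1,
            ENNReal.ofReal (G ξ u s)
        = ∫⁻ u in Ioo (0:ℝ) 1, ∫⁻ s in Ioo (0:ℝ) 1, ∫⁻ ξ in Ioi (0:ℝ),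
            ENNReal.ofReal (G ξ u s) := by
      apply lintegral_congr
      intro u
      apply lintegral_lintegral_swap
      apply Measurable.aemeasurable
      exact hGm.comp (by fun_prop : Measurable fun q : ℝ × ℝ => (q.1, u, q.2))
    have e4 : ∫⁻ u in Ioo (0:ℝ) 1, ∫⁻ s in Ioo (0:ℝ) 1, ∫⁻ ξ in Ioi (0:ℝ),
            ENNReal.ofReal (G ξ u s)
        = ∫⁻ u in Ioo (0:ℝ) 1, ∫⁻ s in Ioo (0:ℝ) 1,
            ENNReal.ofReal (1/(2*(1 - u^2*(1-s^2)))) := by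
      refine setLIntegral_congr_fun measurableSet_Ioo
        (fun u hu => ?_)
      refine setLIntegral_congr_fun measurableSet_Ioo
        (fun s hs => ?_)
      exact step2 hu hs
    have e5 : ∫⁻ u in Ioo (0:ℝ) 1, ∫⁻ s in Ioo (0:ℝ) 1,
            ENNReal.ofReal (1/(2*(1 - u^2*(1-s^2))))
        = ∫⁻ s in Ioo (0:ℝ) 1, ∫⁻ u in Ioo (0:ℝ) 1,
            ENNReal.ofReal (1/(2*(1 - u^2*(1-s^2)))) := by
      apply lintegral_lintegral_swap
      apply Measurable.aemeasurable
      fun_prop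
    have e6 : ∫⁻ s in Ioo (0:ℝ) 1, ∫⁻ u in Ioo (0:ℝ) 1,
            ENNReal.ofReal (1/(2*(1 - u^2*(1-s^2))))
        = ∫⁻ s in Ioo (0:ℝ) 1, ∫⁻ x in Ioo (0:ℝ) 1,
            ENNReal.ofReal ((1-x^2)/((1-x^2)^2 + 4*x^2*s^2)) :=
      setLIntegral_congr_fun measurableSet_Ioo
        (fun s hs => step3 hs)
    have e7 : ∫⁻ s in Ioo (0:ℝ) 1, ∫⁻ x in Ioo (0:ℝ) 1,
            ENNReal.ofReal ((1-x^2)/((1-x^2)^2 + 4*x^2*s^2))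
        = ∫⁻ x in Ioo (0:ℝ) 1, ∫⁻ s in Ioo (0:ℝ) 1,
            ENNReal.ofReal ((1-x^2)/((1-x^2)^2 + 4*x^2*s^2)) := by
      apply lintegral_lintegral_swap
      apply Measurable.aemeasurable
      fun_prop
    have e8 : ∫⁻ x in Ioo (0:ℝ) 1, ∫⁻ s in Ioo (0:ℝ) 1,
            ENNReal.ofReal ((1-x^2)/((1-x^2)^2 + 4*x^2*s^2))
        = ∫⁻ x in Ioo (0:ℝ) 1, ENNReal.ofReal (Real.arctan x / x) :=
      setLIntegral_congr_fun measurableSet_Ioo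
        (fun x hx => step4 hx)
    rw [e1, e2, e3, e4, e5, e6, e7, e8, step5]
  rw [integral_eq_lintegral_of_nonneg_ae hnnf hmeasf]
  rw [key, ENNReal.toReal_ofReal hcat_nonneg]

end CatalanAux

/-- `(4/√π) ∫₀^∞ (∫_ξ^∞ e^{-η²} dη · ∫₀^ξ e^{-η²} dη) / (ξ e^{-ξ²}) dξ = (4/√π) · G`. -/
theorem integral_green_recessive_eq_catalan :
    (4 / Real.sqrt π) *
      ∫ ξ in Ioi (0 : ℝ),
        ((∫ η in Ioi ξ, Real.exp (-η ^ 2)) * ∫ η in (0 : ℝ)..ξ, Real.exp (-η ^ 2)) /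
          (ξ * Real.exp (-ξ ^ 2)) =
    (4 / Real.sqrt π) * catalanConstant := by
  rw [CatalanAux.main_integral]
end

section
/- The integral ∫_0^∞ [∫_0^ξ e^{η²} dη] / (ξ e^{ξ²}) dξ equals π^{3/2}/4. -/
open Real MeasureTheory Set

set_option maxHeartbeats 1000000

lemma pointwise_sweep {ξ : ℝ} (hξ : 0 < ξ) :
    (∫ η in (0 : ℝ)..ξ, Real.exp (η ^ 2)) / (ξ * Real.exp (ξ ^ 2)) =
      ∫ θ in Ioo (0 : ℝ) (π / 2), Real.cos θ * Real.exp (-(Real.cos θ) ^ 2 * ξ ^ 2) := by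
  have hsub := intervalIntegral.integral_comp_smul_deriv (a := (0:ℝ)) (b := π / 2)
      (f := fun θ => ξ * Real.sin θ) (f' := fun θ => ξ * Real.cos θ)
      (g := fun x => Real.exp (x ^ 2))
      (fun x _ => (Real.hasDerivAt_sin x).const_mul ξ)
      ((continuous_const.mul Real.continuous_cos).continuousOn)
      (Real.continuous_exp.comp (continuous_pow 2))
  simp only [Function.comp, Real.sin_zero, Real.sin_pi_div_two, mul_zero, mul_one] at hsub
  rw [← hsub]
  rw [intervalIntegral.integral_of_le (by positivity : (0:ℝ) ≤ π / 2),
    MeasureTheory.integral_Ioc_eq_integral_Ioo, ← MeasureTheory.integral_div]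
  apply MeasureTheory.setIntegral_congr_fun measurableSet_Ioo
  intro θ _
  have hξne : ξ ≠ 0 := ne_of_gt hξ
  have h1 : Real.exp ((ξ * Real.sin θ) ^ 2) / Real.exp (ξ ^ 2)
      = Real.exp (-(Real.cos θ) ^ 2 * ξ ^ 2) := by
    rw [← Real.exp_sub]
    congr 1
    linear_combination ξ ^ 2 * Real.sin_sq_add_cos_sq θ
  simp only [smul_eq_mul]
  rw [show (ξ * Real.cos θ) * Real.exp ((ξ * Real.sin θ) ^ 2)
      = ξ * (Real.cos θ * Real.exp ((ξ * Real.sin θ) ^ 2)) from by ring]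
  rw [mul_div_mul_left _ _ hξne, mul_div_assoc, h1]

/-- `∫₀^∞ (∫₀^ξ e^{η²} dη) / (ξ e^{ξ²}) dξ = π^{3/2} / 4`. -/
theorem integral_dominant_sweep_eq :
    ∫ ξ in Ioi (0 : ℝ),
        (∫ η in (0 : ℝ)..ξ, Real.exp (η ^ 2)) / (ξ * Real.exp (ξ ^ 2)) =
      π ^ ((3 : ℝ) / 2) / 4 := by
  set G : ℝ → ℝ → ℝ := fun θ ξ => Real.cos θ * Real.exp (-(Real.cos θ) ^ 2 * ξ ^ 2) with hG
  have hGc : Continuous fun p : ℝ × ℝ => G p.2 p.1 := by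
    simp only [hG]
    exact (Real.continuous_cos.comp continuous_snd).mul
      (Real.continuous_exp.comp
        ((((Real.continuous_cos.comp continuous_snd).pow 2).neg).mul (continuous_fst.pow 2)))
  have hGnn : ∀ θ ∈ Ioo (0 : ℝ) (π / 2), ∀ ξ : ℝ, 0 ≤ G θ ξ := by
    intro θ hθ ξ
    have : 0 ≤ Real.cos θ := Real.cos_nonneg_of_mem_Icc
      ⟨by linarith [hθ.1, Real.pi_pos], hθ.2.le⟩
    have h2 := Real.exp_pos (-(Real.cos θ) ^ 2 * ξ ^ 2)
    simp only [hG]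
    nlinarith
  have step1 : (∫ ξ in Ioi (0 : ℝ),
        (∫ η in (0 : ℝ)..ξ, Real.exp (η ^ 2)) / (ξ * Real.exp (ξ ^ 2)))
      = ∫ ξ in Ioi (0 : ℝ), ∫ θ in Ioo (0 : ℝ) (π / 2), G θ ξ := by
    apply MeasureTheory.setIntegral_congr_fun measurableSet_Ioi
    intro ξ hξ
    exact pointwise_sweep hξ
  rw [step1]
  have hH_nn : ∀ ξ : ℝ, 0 ≤ ∫ θ in Ioo (0 : ℝ) (π / 2), G θ ξ := fun ξ =>
    MeasureTheory.setIntegral_nonneg measurableSet_Ioo (fun θ hθ => hGnn θ hθ ξ)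
  have hH_meas : AEStronglyMeasurable
      (fun ξ : ℝ => ∫ θ in Ioo (0 : ℝ) (π / 2), G θ ξ)
      (volume.restrict (Ioi (0:ℝ))) := by
    have h := (hGc.stronglyMeasurable).integral_prod_right'
      (ν := volume.restrict (Ioo (0:ℝ) (π / 2)))
    exact h.aestronglyMeasurable
  rw [MeasureTheory.integral_eq_lintegral_of_nonneg_ae
    (Filter.Eventually.of_forall hH_nn) hH_meas]
  have key : (∫⁻ ξ in Ioi (0:ℝ),
        ENNReal.ofReal (∫ θ in Ioo (0 : ℝ) (π / 2), G θ ξ))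
      = ENNReal.ofReal (Real.sqrt π / 2 * (π / 2)) := by
    have hint : ∀ ξ : ℝ, ENNReal.ofReal (∫ θ in Ioo (0 : ℝ) (π / 2), G θ ξ)
        = ∫⁻ θ in Ioo (0 : ℝ) (π / 2), ENNReal.ofReal (G θ ξ) := by
      intro ξ
      apply MeasureTheory.ofReal_integral_eq_lintegral_ofReal
      · apply MeasureTheory.IntegrableOn.mono_set
          (t := Icc (0:ℝ) (π/2)) _ Ioo_subset_Icc_self
        apply ContinuousOn.integrableOn_compact isCompact_Icc
        apply Continuous.continuousOn
        simp only [hG]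
        exact Real.continuous_cos.mul
          (Real.continuous_exp.comp (((Real.continuous_cos.pow 2).neg).mul continuous_const))
      · exact (MeasureTheory.ae_restrict_mem measurableSet_Ioo).mono
          (fun θ hθ => hGnn θ hθ ξ)
    simp only [hint]
    have hunc : AEMeasurable (Function.uncurry fun ξ θ => ENNReal.ofReal (G θ ξ))
        ((volume.restrict (Ioi (0:ℝ))).prod (volume.restrict (Ioo (0:ℝ) (π / 2)))) := by
      exact (ENNReal.measurable_ofReal.comp hGc.measurable).aemeasurable
    rw [MeasureTheory.lintegral_lintegral_swap hunc]
    have inner : ∀ θ ∈ Ioo (0:ℝ) (π/2),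
        (∫⁻ ξ in Ioi (0:ℝ), ENNReal.ofReal (G θ ξ))
          = ENNReal.ofReal (Real.sqrt π / 2) := by
      intro θ hθ
      have hc : 0 < Real.cos θ := Real.cos_pos_of_mem_Ioo
        ⟨by linarith [hθ.1, Real.pi_pos], hθ.2⟩
      have hb : 0 < (Real.cos θ) ^ 2 := by positivity
      have hint2 : IntegrableOn (fun ξ => G θ ξ) (Ioi (0:ℝ)) :=
        ((integrable_exp_neg_mul_sq hb).const_mul _).integrableOn
      rw [← MeasureTheory.ofReal_integral_eq_lintegral_ofReal hint2
        (Filter.Eventually.of_forall (fun ξ =>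
          mul_nonneg hc.le (Real.exp_pos _).le))]
      congr 1
      have h3 : (∫ ξ in Ioi (0:ℝ), G θ ξ)
          = Real.cos θ * ∫ ξ in Ioi (0:ℝ), Real.exp (-(Real.cos θ)^2 * ξ ^ 2) := by
        rw [← MeasureTheory.integral_const_mul]
      rw [h3, integral_gaussian_Ioi, Real.sqrt_div pi_pos.le, Real.sqrt_sq hc.le]
      field_simp
    rw [MeasureTheory.setLIntegral_congr_fun measurableSet_Ioo
      inner]
    rw [MeasureTheory.setLIntegral_const, Real.volume_Ioo,
      ← ENNReal.ofReal_mul (by positivity)]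
    norm_num
  rw [key, ENNReal.toReal_ofReal (by positivity)]
  have hpi : π ^ ((3:ℝ)/2) = π * Real.sqrt π := by
    rw [Real.sqrt_eq_rpow, show (3:ℝ)/2 = 1 + 1/2 by norm_num,
      Real.rpow_add pi_pos, Real.rpow_one]
  rw [hpi]
  ring
end

section
/- Fix h with 0 < h ≤ 1, and let ε_α > 0 satisfy ε_α α → 0 as α → ∞. Then ∫_0^{ε_α} e^{-2hαη − (1−2h)αη²} dη / ∫_0^1 e^{-2hαη − (1−2h)αη²} dη ~ 2hα ε_α as α → ∞. -/
open Real Filter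
set_option maxHeartbeats 1000000

private lemma contF (h α : ℝ) :
    Continuous fun η : ℝ => Real.exp (-2*h*α*η - (1-2*h)*α*η^2) := by fun_prop

private lemma intF (h α a b : ℝ) :
    IntervalIntegrable (fun η : ℝ => Real.exp (-2*h*α*η - (1-2*h)*α*η^2))
      MeasureTheory.volume a b := (contF h α).intervalIntegrable a b

private lemma num_asymp (h : ℝ) (ε : ℝ → ℝ) (hpos : ∀ α : ℝ, 0 < ε α)
    (hsmall : Tendsto (fun α : ℝ => ε α * α) atTop (nhds 0)) :
    Tendsto (fun α : ℝ =>
      (∫ η in (0:ℝ)..(ε α), Real.exp (-2*h*α*η - (1-2*h)*α*η^2)) / ε α)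
      atTop (nhds 1) := by
  set c : ℝ → ℝ := fun α => 2* |h| * (ε α * α) + |1-2*h| * (ε α * (ε α * α)) with hc
  have hε0 : Tendsto ε atTop (nhds 0) := by
    apply tendsto_of_tendsto_of_tendsto_of_le_of_le' tendsto_const_nhds hsmall
    · exact Eventually.of_forall fun α => (hpos α).le
    · filter_upwards [eventually_ge_atTop (1:ℝ)] with α hα
      exact le_mul_of_one_le_right (hpos α).le hα
  have hctend : Tendsto c atTop (nhds 0) := by
    have := ((tendsto_const_nhds (x := 2* |h|)).mul hsmall).add
      (((tendsto_const_nhds (x := |1-2*h|)).mul (hε0.mul hsmall)))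
    simpa [hc] using this
  have key : ∀ᶠ α : ℝ in atTop,
      Real.exp (-(c α)) ≤ (∫ η in (0:ℝ)..(ε α), Real.exp (-2*h*α*η - (1-2*h)*α*η^2)) / ε α ∧
      (∫ η in (0:ℝ)..(ε α), Real.exp (-2*h*α*η - (1-2*h)*α*η^2)) / ε α ≤ Real.exp (c α) := by
    filter_upwards [eventually_ge_atTop (0:ℝ)] with α hα
    have hεα := hpos α
    have hbound : ∀ η ∈ Set.Icc (0:ℝ) (ε α),
        |2*h*α*η + (1-2*h)*α*η^2| ≤ c α := by
      rintro η ⟨hη0, hη1⟩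
      have k1 : h ≤ |h| := le_abs_self h
      have k2 : -|h| ≤ h := neg_abs_le h
      have k3 : 1-2*h ≤ |1-2*h| := le_abs_self _
      have k4 : -|1-2*h| ≤ 1-2*h := neg_abs_le _
      have m1 : h*(α*η) ≤ |h| *(ε α * α) := by
        nlinarith [mul_nonneg (sub_nonneg.mpr k1) (mul_nonneg hα hη0),
          mul_nonneg (abs_nonneg h) (mul_nonneg hα (sub_nonneg.mpr hη1))]
      have m2 : (1-2*h)*(α*η^2) ≤ |1-2*h| *(ε α*(ε α*α)) := by
        nlinarith [mul_nonneg (sub_nonneg.mpr k3) (mul_nonneg hα (mul_nonneg hη0 hη0)),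
          mul_nonneg (abs_nonneg (1-2*h)) (mul_nonneg hα
            (mul_nonneg (sub_nonneg.mpr hη1) (by linarith : (0:ℝ) ≤ ε α + η)))]
      have m1' : -(|h| *(ε α * α)) ≤ h*(α*η) := by
        nlinarith [mul_nonneg (by linarith : (0:ℝ) ≤ h + |h|) (mul_nonneg hα hη0),
          mul_nonneg (abs_nonneg h) (mul_nonneg hα (sub_nonneg.mpr hη1))]
      have m2' : -(|1-2*h| *(ε α*(ε α*α))) ≤ (1-2*h)*(α*η^2) := by
        nlinarith [mul_nonneg (by linarith : (0:ℝ) ≤ (1-2*h) + |1-2*h|)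
            (mul_nonneg hα (mul_nonneg hη0 hη0)),
          mul_nonneg (abs_nonneg (1-2*h)) (mul_nonneg hα
            (mul_nonneg (sub_nonneg.mpr hη1) (by linarith : (0:ℝ) ≤ ε α + η)))]
      rw [abs_le, hc]
      constructor <;> [skip; skip] <;> simp only [] <;> nlinarith [m1, m2, m1', m2']
    have hlow : ε α * Real.exp (-(c α)) ≤
        ∫ η in (0:ℝ)..(ε α), Real.exp (-2*h*α*η - (1-2*h)*α*η^2) := by
      have := intervalIntegral.integral_mono_on (hpos α).le
        (intervalIntegrable_const (c := Real.exp (-(c α)))) (intF h α 0 (ε α))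
        (fun η hη => by
          apply Real.exp_le_exp.mpr
          have := (abs_le.mp (hbound η hη)).2
          linarith)
      simpa using this
    have hup : (∫ η in (0:ℝ)..(ε α), Real.exp (-2*h*α*η - (1-2*h)*α*η^2)) ≤
        ε α * Real.exp (c α) := by
      have := intervalIntegral.integral_mono_on (hpos α).le (intF h α 0 (ε α))
        (intervalIntegrable_const (c := Real.exp (c α)))
        (fun η hη => by
          apply Real.exp_le_exp.mpr
          have := (abs_le.mp (hbound η hη)).1
          linarith)
      simpa using this
    constructor
    · rw [le_div_iff₀ hεα]; linarith
    · rw [div_le_iff₀ hεα]; linarith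
  have l1 : Tendsto (fun α => Real.exp (-(c α))) atTop (nhds 1) := by
    have := (Real.continuous_exp.tendsto 0).comp (by simpa using hctend.neg)
    simpa [Function.comp_def] using this
  have l2 : Tendsto (fun α => Real.exp (c α)) atTop (nhds 1) := by
    have := (Real.continuous_exp.tendsto 0).comp hctend
    simpa [Function.comp_def] using this
  exact tendsto_of_tendsto_of_tendsto_of_le_of_le' l1 l2
    (key.mono fun α hα => hα.1) (key.mono fun α hα => hα.2)


private lemma contF' (h α : ℝ) :
    Continuous fun η : ℝ => Real.exp (-2*h*α*η - (1-2*h)*α*η^2) := by fun_prop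

private lemma intF' (h α a b : ℝ) :
    IntervalIntegrable (fun η : ℝ => Real.exp (-2*h*α*η - (1-2*h)*α*η^2))
      MeasureTheory.volume a b := (contF' h α).intervalIntegrable a b

private lemma integral_exp_neg_mul' (k b : ℝ) (hk : k ≠ 0) :
    ∫ η in (0:ℝ)..b, Real.exp (-(k*η)) = (1 - Real.exp (-(k*b))) / k := by
  have h1 : ∀ η : ℝ, Real.exp (-(k*η)) = Real.exp ((-k)*η) := by intro η; ring_nf
  simp_rw [h1]
  rw [intervalIntegral.integral_comp_mul_left Real.exp (neg_ne_zero.mpr hk),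
    integral_exp]
  have : -k * b = -(k*b) := by ring
  rw [this]
  field_simp
  simp only [mul_zero, neg_zero, Real.exp_zero]
  linear_combination (1 - Real.exp (-(k*b))) * mul_inv_cancel₀ hk

private lemma sqrt_tendsto_atTop' : Tendsto Real.sqrt atTop atTop := by
  apply tendsto_atTop_atTop.mpr
  intro b
  refine ⟨b^2, fun a ha => ?_⟩
  calc b ≤ |b| := le_abs_self b
  _ = Real.sqrt (b^2) := (Real.sqrt_sq_eq_abs b).symm
  _ ≤ Real.sqrt a := Real.sqrt_le_sqrt ha

private lemma den_asymp (h : ℝ) (hh0 : 0 < h) (hh1 : h ≤ 1) :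
    Tendsto (fun α : ℝ => 2*h*α * ∫ η in (0:ℝ)..1, Real.exp (-2*h*α*η - (1-2*h)*α*η^2))
      atTop (nhds 1) := by
  set cc : ℝ := |1-2*h| with hcc
  have hcc0 : 0 ≤ cc := abs_nonneg _
  have hcc1 : cc ≤ 1 := by rw [hcc, abs_le]; constructor <;> linarith
  set δ : ℝ → ℝ := fun α => (Real.sqrt α)⁻¹ with hδdef
  have hδ0 : Tendsto δ atTop (nhds 0) := sqrt_tendsto_atTop'.inv_tendsto_atTop
  set L : ℝ → ℝ := fun α =>
    (2*h/(2*h + cc*δ α)) * (1 - Real.exp (-((2*h + cc*δ α) * Real.sqrt α))) with hLdef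
  set U : ℝ → ℝ := fun α =>
    2*h/(2*h - cc*δ α) + 2*h*α * Real.exp (-(h * Real.sqrt α)) with hUdef
  -- eventual bounds
  have key : ∀ᶠ α : ℝ in atTop,
      L α ≤ 2*h*α * (∫ η in (0:ℝ)..1, Real.exp (-2*h*α*η - (1-2*h)*α*η^2)) ∧
      2*h*α * (∫ η in (0:ℝ)..1, Real.exp (-2*h*α*η - (1-2*h)*α*η^2)) ≤ U α := by
    filter_upwards [eventually_ge_atTop (1:ℝ), hδ0.eventually (gt_mem_nhds hh0)]
      with α hα1 hδh
    have hα0 : (0:ℝ) < α := lt_of_lt_of_le one_pos hα1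
    have hs : 0 < Real.sqrt α := Real.sqrt_pos.mpr hα0
    have hδpos : 0 < δ α := inv_pos.mpr hs
    have hδ1 : δ α ≤ 1 := by
      rw [hδdef]
      simp only []
      rw [inv_le_one_iff₀]
      right
      rw [Real.one_le_sqrt]
      exact hα1
    have hαδ : α * δ α = Real.sqrt α := by
      rw [hδdef]
      field_simp
      exact (Real.sq_sqrt hα0.le).symm
    have hccδh : cc * δ α < h := by nlinarith
    have hsplit : (∫ η in (0:ℝ)..1, Real.exp (-2*h*α*η - (1-2*h)*α*η^2)) =
        (∫ η in (0:ℝ)..(δ α), Real.exp (-2*h*α*η - (1-2*h)*α*η^2)) +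
        (∫ η in (δ α)..1, Real.exp (-2*h*α*η - (1-2*h)*α*η^2)) :=
      (intervalIntegral.integral_add_adjacent_intervals (intF' h α 0 (δ α))
        (intF' h α (δ α) 1)).symm
    set k1 : ℝ := (2*h + cc*δ α) * α with hk1
    set k2 : ℝ := (2*h - cc*δ α) * α with hk2
    have hk1pos : 0 < k1 := by positivity
    have hk2pos : 0 < k2 := by
      rw [hk2]; apply mul_pos _ hα0; linarith
    -- lower bound on I1
    have hI1low : (1 - Real.exp (-(k1 * δ α))) / k1 ≤
        ∫ η in (0:ℝ)..(δ α), Real.exp (-2*h*α*η - (1-2*h)*α*η^2) := by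
      rw [← integral_exp_neg_mul' k1 (δ α) hk1pos.ne']
      apply intervalIntegral.integral_mono_on hδpos.le
        (((Real.continuous_exp.comp (by fun_prop)).intervalIntegrable 0 (δ α)))
        (intF' h α 0 (δ α))
      rintro η ⟨hη0, hη1⟩
      show Real.exp (-(k1 * η)) ≤ Real.exp (-2*h*α*η - (1-2*h)*α*η^2)
      apply Real.exp_le_exp.mpr
      have hb : 2*h*α*η + (1-2*h)*α*η^2 ≤ k1 * η := by
        rw [hk1]
        have e1 : (1-2*h) ≤ cc := le_abs_self _
        nlinarith [mul_nonneg (mul_nonneg (sub_nonneg.mpr e1) hα0.le)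
            (mul_nonneg hη0 hη0),
          mul_nonneg (mul_nonneg (mul_nonneg hcc0 hα0.le) hη0)
            (sub_nonneg.mpr hη1)]
      linarith
    -- upper bound on I1
    have hI1up : (∫ η in (0:ℝ)..(δ α), Real.exp (-2*h*α*η - (1-2*h)*α*η^2)) ≤
        1 / k2 := by
      have step : (∫ η in (0:ℝ)..(δ α), Real.exp (-2*h*α*η - (1-2*h)*α*η^2)) ≤
          (1 - Real.exp (-(k2 * δ α))) / k2 := by
        rw [← integral_exp_neg_mul' k2 (δ α) hk2pos.ne']
        apply intervalIntegral.integral_mono_on hδpos.le (intF' h α 0 (δ α))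
          (((Real.continuous_exp.comp (by fun_prop)).intervalIntegrable 0 (δ α)))
        rintro η ⟨hη0, hη1⟩
        show Real.exp (-2*h*α*η - (1-2*h)*α*η^2) ≤ Real.exp (-(k2 * η))
        apply Real.exp_le_exp.mpr
        have hb : k2 * η ≤ 2*h*α*η + (1-2*h)*α*η^2 := by
          rw [hk2]
          have e1 : -cc ≤ (1-2*h) := neg_abs_le _
          nlinarith [mul_nonneg (mul_nonneg (by linarith : (0:ℝ) ≤ (1-2*h) + cc) hα0.le)
              (mul_nonneg hη0 hη0),
            mul_nonneg (mul_nonneg (mul_nonneg hcc0 hα0.le) hη0)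
              (sub_nonneg.mpr hη1)]
        linarith
      refine step.trans ?_
      apply (div_le_div_iff_of_pos_right hk2pos).mpr
      linarith [Real.exp_pos (-(k2 * δ α))]
    -- bounds on I2
    have hI2low : (0:ℝ) ≤ ∫ η in (δ α)..1, Real.exp (-2*h*α*η - (1-2*h)*α*η^2) :=
      intervalIntegral.integral_nonneg hδ1 (fun u _ => (Real.exp_pos _).le)
    have hI2up : (∫ η in (δ α)..1, Real.exp (-2*h*α*η - (1-2*h)*α*η^2)) ≤
        Real.exp (-(h * Real.sqrt α)) := by
      have step : (∫ η in (δ α)..1, Real.exp (-2*h*α*η - (1-2*h)*α*η^2)) ≤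
          (1 - δ α) * Real.exp (-(h * Real.sqrt α)) := by
        have := intervalIntegral.integral_mono_on hδ1 (intF' h α (δ α) 1)
          (intervalIntegrable_const (c := Real.exp (-(h * Real.sqrt α))))
          (fun η hη => by
            obtain ⟨hηδ, hη1'⟩ := hη
            apply Real.exp_le_exp.mpr
            have hη0' : 0 ≤ η := le_trans hδpos.le hηδ
            have hkey : 0 ≤ h + (1-2*h)*η := by
              rcases le_or_gt 0 (1-2*h) with hcase | hcase
              · nlinarith
              · nlinarith
            have : h * Real.sqrt α = h * (α * δ α) := by rw [hαδ]
            rw [this]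
            have : h * (α * δ α) ≤ 2*h*α*η + (1-2*h)*α*η^2 := by
              nlinarith [mul_nonneg (mul_nonneg hα0.le hη0') hkey,
                mul_nonneg (mul_nonneg hh0.le hα0.le) (sub_nonneg.mpr hηδ)]
            linarith)
        simpa using this
      refine step.trans ?_
      have h9 := mul_le_mul_of_nonneg_right (by linarith : (1 - δ α) ≤ 1)
        (Real.exp_pos (-(h * Real.sqrt α))).le
      simpa using h9
    constructor
    · -- lower
      rw [hsplit, hLdef]
      simp only []
      have expand : (2*h/(2*h + cc*δ α)) * (1 - Real.exp (-((2*h + cc*δ α) * Real.sqrt α)))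
          = 2*h*α * ((1 - Real.exp (-(k1 * δ α))) / k1) := by
        have h1 : k1 * δ α = (2*h + cc*δ α) * Real.sqrt α := by
          rw [hk1, ← hαδ]; ring
        rw [h1, hk1]
        have hne : 2*h + cc*δ α ≠ 0 := by positivity
        field_simp
      rw [expand]
      have hsum : (1 - Real.exp (-(k1 * δ α))) / k1 ≤
          (∫ η in (0:ℝ)..(δ α), Real.exp (-2*h*α*η - (1-2*h)*α*η^2)) +
          (∫ η in (δ α)..1, Real.exp (-2*h*α*η - (1-2*h)*α*η^2)) := by linarith
      exact mul_le_mul_of_nonneg_left hsum (by positivity)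
    · -- upper
      rw [hsplit, hUdef]
      simp only []
      have e2 : 2*h*α * (1/k2) = 2*h/(2*h - cc*δ α) := by
        rw [hk2]
        have hne : 2*h - cc*δ α ≠ 0 := by linarith
        field_simp
      calc 2*h*α * ((∫ η in (0:ℝ)..(δ α), Real.exp (-2*h*α*η - (1-2*h)*α*η^2)) +
            (∫ η in (δ α)..1, Real.exp (-2*h*α*η - (1-2*h)*α*η^2)))
          ≤ 2*h*α * (1/k2 + Real.exp (-(h * Real.sqrt α))) :=
            mul_le_mul_of_nonneg_left (add_le_add hI1up hI2up) (by positivity)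
        _ = 2*h/(2*h - cc*δ α) + 2*h*α * Real.exp (-(h * Real.sqrt α)) := by
            rw [mul_add, e2]
  -- limits of L and U
  have hδnn : ∀ α : ℝ, 0 ≤ δ α := fun α => by
    rw [hδdef]; positivity
  have h2hne : (2:ℝ)*h ≠ 0 := by linarith
  have hLlim : Tendsto L atTop (nhds 1) := by
    rw [hLdef]
    have p1 : Tendsto (fun α => 2*h/(2*h + cc*δ α)) atTop (nhds 1) := by
      have := (tendsto_const_nhds (x := 2*h)).div
        ((tendsto_const_nhds (x := 2*h)).add ((tendsto_const_nhds (x := cc)).mul hδ0))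
        (by simpa using h2hne)
      simpa [div_self h2hne, Pi.div_def] using this
    have hbig : Tendsto (fun α => 2*h*Real.sqrt α) atTop atTop :=
      sqrt_tendsto_atTop'.const_mul_atTop (by linarith)
    have h0 : Tendsto (fun α => Real.exp (-(2*h*Real.sqrt α))) atTop (nhds 0) :=
      Real.tendsto_exp_neg_atTop_nhds_zero.comp hbig
    have p2exp : Tendsto (fun α => Real.exp (-((2*h + cc*δ α) * Real.sqrt α)))
        atTop (nhds 0) := by
      apply tendsto_of_tendsto_of_tendsto_of_le_of_le' tendsto_const_nhds h0
      · exact Eventually.of_forall fun α => (Real.exp_pos _).le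
      · apply Eventually.of_forall fun α => ?_
        apply Real.exp_le_exp.mpr
        apply neg_le_neg
        apply mul_le_mul_of_nonneg_right _ (Real.sqrt_nonneg α)
        nlinarith [hδnn α, mul_nonneg hcc0 (hδnn α)]
    have p2 : Tendsto (fun α => 1 - Real.exp (-((2*h + cc*δ α) * Real.sqrt α)))
        atTop (nhds 1) := by
      have := (tendsto_const_nhds (x := (1:ℝ))).sub p2exp
      simpa using this
    simpa using p1.mul p2
  have hUlim : Tendsto U atTop (nhds 1) := by
    rw [hUdef]
    have q1 : Tendsto (fun α => 2*h/(2*h - cc*δ α)) atTop (nhds 1) := by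
      have := (tendsto_const_nhds (x := 2*h)).div
        ((tendsto_const_nhds (x := 2*h)).sub ((tendsto_const_nhds (x := cc)).mul hδ0))
        (by simpa using h2hne)
      simpa [div_self h2hne, Pi.div_def] using this
    have q2 : Tendsto (fun α => 2*h*α * Real.exp (-(h * Real.sqrt α))) atTop (nhds 0) := by
      have base := (Real.tendsto_pow_mul_exp_neg_atTop_nhds_zero 2).comp
        (sqrt_tendsto_atTop'.const_mul_atTop hh0)
      have scaled := base.const_mul (2/h)
      rw [mul_zero] at scaled
      apply Tendsto.congr' _ scaled
      filter_upwards [eventually_ge_atTop (0:ℝ)] with α hα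
      show (2/h) * ((h * Real.sqrt α)^2 * Real.exp (-(h * Real.sqrt α)))
          = 2*h*α * Real.exp (-(h * Real.sqrt α))
      have hsq : Real.sqrt α ^ 2 = α := Real.sq_sqrt hα
      rw [mul_pow, hsq]
      field_simp
    have := q1.add q2
    simpa using this
  exact tendsto_of_tendsto_of_tendsto_of_le_of_le' hLlim hUlim
    (key.mono fun α hα => hα.1) (key.mono fun α hα => hα.2)

/-- For fixed `0 < h ≤ 1` and `ε_α > 0` with `ε_α α → 0`,
`∫₀^{ε_α} e^{-2hαη − (1−2h)αη²} dη / ∫₀^1 e^{-2hαη − (1−2h)αη²} dη ~ 2hα ε_α`. -/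
theorem fixation_probability_dominance_asymptotic
    (h : ℝ) (hh0 : 0 < h) (hh1 : h ≤ 1)
    (ε : ℝ → ℝ) (hpos : ∀ α : ℝ, 0 < ε α)
    (hsmall : Tendsto (fun α : ℝ => ε α * α) atTop (nhds 0)) :
    Tendsto
      (fun α : ℝ =>
        ((∫ η in (0 : ℝ)..(ε α),
            Real.exp (-2 * h * α * η - (1 - 2 * h) * α * η ^ 2)) /
            ∫ η in (0 : ℝ)..1,
              Real.exp (-2 * h * α * η - (1 - 2 * h) * α * η ^ 2)) /
          (2 * h * α * ε α))
      atTop (nhds 1) := by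
  have hnum := num_asymp h ε hpos hsmall
  have hden := den_asymp h hh0 hh1
  have hcomb : Tendsto (fun α : ℝ =>
      ((∫ η in (0:ℝ)..(ε α), Real.exp (-2*h*α*η - (1-2*h)*α*η^2)) / ε α) /
      (2*h*α * ∫ η in (0:ℝ)..1, Real.exp (-2*h*α*η - (1-2*h)*α*η^2)))
      atTop (nhds (1/1)) := hnum.div hden one_ne_zero
  have heq : (fun α : ℝ =>
      ((∫ η in (0:ℝ)..(ε α), Real.exp (-2*h*α*η - (1-2*h)*α*η^2)) / ε α) /
      (2*h*α * ∫ η in (0:ℝ)..1, Real.exp (-2*h*α*η - (1-2*h)*α*η^2)))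
      = (fun α : ℝ =>
      ((∫ η in (0:ℝ)..(ε α), Real.exp (-2 * h * α * η - (1 - 2 * h) * α * η ^ 2)) /
        ∫ η in (0:ℝ)..1, Real.exp (-2 * h * α * η - (1 - 2 * h) * α * η ^ 2)) /
      (2 * h * α * ε α)) := by
    funext α
    ring
  rw [heq] at hcomb
  simpa using hcomb
end

section
/- For fixed 0 < h ≤ 1, as α → ∞: ∫_0^α e^{-2hη + (2h−1)η²/α} dη − 1/(2h) is asymptotically equivalent to (2h−1)/(4h³α) (when h ≠ 1/2; for h = 1/2 the difference is o(1/α)). -/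
open Real Filter MeasureTheory Set

private lemma aux_exp_interval (h α : ℝ) (hh0 : 0 < h) :
    ∫ η in (0:ℝ)..α, Real.exp (-(2*h)*η) = 1/(2*h) - Real.exp (-(2*h)*α)/(2*h) := by
  have key : ∀ η : ℝ, HasDerivAt (fun η => -(Real.exp (-(2*h)*η))/(2*h))
      (Real.exp (-(2*h)*η)) η := by
    intro η
    have h2 := ((((hasDerivAt_id η).const_mul (-(2*h))).exp).div_const (2*h)).neg
    have e1 : (-fun x => Real.exp (-(2*h) * id x) / (2*h))
        = (fun η => -(Real.exp (-(2*h)*η))/(2*h)) := by funext x; simp [neg_div]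
    have e2 : -(Real.exp (-(2*h) * id η) * (-(2*h) * 1) / (2*h)) = Real.exp (-(2*h)*η) := by
      simp only [id_eq, mul_one, mul_neg, neg_div, neg_neg]
      rw [mul_div_assoc, div_self (by positivity : (2:ℝ)*h ≠ 0), mul_one]
    rw [e1, e2] at h2
    exact h2
  rw [intervalIntegral.integral_eq_sub_of_hasDerivAt (fun η _ => key η)
    ((Real.continuous_exp.comp (by continuity)).intervalIntegrable _ _)]
  simp
  ring

private lemma aux_ptwise (k : ℝ) :
    Tendsto (fun α : ℝ => α * (Real.exp (k/α) - 1)) atTop (nhds k) := by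
  have hd : HasDerivAt (fun t : ℝ => Real.exp (k * t)) k 0 := by
    have := ((hasDerivAt_id (0:ℝ)).const_mul k).exp
    simpa using this
  have hs := hasDerivAt_iff_tendsto_slope.mp hd
  have hinv : Tendsto (fun α : ℝ => α⁻¹) atTop (nhdsWithin (0:ℝ) {(0:ℝ)}ᶜ) := by
    rw [tendsto_nhdsWithin_iff]
    exact ⟨tendsto_inv_atTop_zero, (eventually_gt_atTop 0).mono fun α hα =>
      (ne_of_gt (inv_pos.2 hα))⟩
  refine (hs.comp hinv).congr' ?_
  filter_upwards [eventually_gt_atTop 0] with α hα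
  simp only [Function.comp_apply, slope_def_field]
  rw [mul_zero, Real.exp_zero, sub_zero, div_eq_mul_inv, inv_inv, mul_comm, ← div_eq_mul_inv k]

private lemma aux_g_int (c m : ℝ) (hm : 0 < m) :
    Integrable (fun η : ℝ => |c| * (η^2 * Real.exp (-(m*η))))
      (volume.restrict (Set.Ioi 0)) := by
  have h1 : IntegrableOn (fun x : ℝ => x ^ (2:ℝ) * Real.exp (-m * x ^ (1:ℝ))) (Set.Ioi 0) :=
    integrableOn_rpow_mul_exp_neg_mul_rpow (by norm_num) one_pos hm
  have h2 : IntegrableOn (fun x : ℝ => x^2 * Real.exp (-(m*x))) (Set.Ioi 0) := by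
    refine h1.congr_fun (fun x hx => ?_) measurableSet_Ioi
    beta_reduce
    rw [Real.rpow_one, neg_mul]
    norm_cast
  exact h2.const_mul _

private lemma aux_value (h c : ℝ) (hh0 : 0 < h) :
    ∫ η in Set.Ioi (0:ℝ), Real.exp (-(2*h)*η) * (c*η^2) = c/(4*h^3) := by
  have h3 : ∫ t in Set.Ioi (0:ℝ), t ^ ((3:ℝ)-1) * Real.exp (-(2*h*t))
      = (1/(2*h))^(3:ℝ) * Real.Gamma 3 :=
    Real.integral_rpow_mul_exp_neg_mul_Ioi (by norm_num) (by positivity)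
  have h4 : ∫ t in Set.Ioi (0:ℝ), t^2 * Real.exp (-(2*h*t)) = 1/(4*h^3) := by
    rw [show ∫ t in Set.Ioi (0:ℝ), t^2 * Real.exp (-(2*h*t))
        = ∫ t in Set.Ioi (0:ℝ), t ^ ((3:ℝ)-1) * Real.exp (-(2*h*t)) from
      setIntegral_congr_fun measurableSet_Ioi (fun t ht => by
        rw [show ((3:ℝ)-1) = ((2:ℕ):ℝ) by norm_num, Real.rpow_natCast]), h3]
    rw [show Real.Gamma 3 = 2 by
      rw [show (3:ℝ) = (2:ℕ)+1 by norm_num, Real.Gamma_nat_eq_factorial]; norm_num]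
    rw [show ((1:ℝ)/(2*h))^(3:ℝ) = (1/(2*h))^(3:ℕ) from by
      rw [← Real.rpow_natCast]; norm_num]
    field_simp
    ring
  calc ∫ η in Set.Ioi (0:ℝ), Real.exp (-(2*h)*η) * (c*η^2)
      = c * ∫ t in Set.Ioi (0:ℝ), t^2 * Real.exp (-(2*h*t)) := by
        rw [← integral_const_mul]
        exact setIntegral_congr_fun measurableSet_Ioi (fun t ht => by ring_nf)
    _ = c/(4*h^3) := by rw [h4]; ring

private lemma aux_tail (h : ℝ) (hh0 : 0 < h) :
    Tendsto (fun α : ℝ => α * (Real.exp (-(2*h)*α)/(2*h))) atTop (nhds 0) := by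
  have h1 := Real.tendsto_pow_mul_exp_neg_atTop_nhds_zero 1
  have h2 : Tendsto (fun α : ℝ => 2*h*α) atTop atTop :=
    Filter.tendsto_id.const_mul_atTop (by positivity)
  have h3 := (h1.comp h2).const_mul (1/(2*h)*(1/(2*h)))
  simp only [mul_zero] at h3
  refine h3.congr' ?_
  filter_upwards [eventually_gt_atTop 0] with α hα
  simp only [Function.comp_apply, pow_one]
  field_simp

private lemma aux_bound (h m α η : ℝ) (hh0 : 0 < h) (hm1 : m ≤ 1) (hm2 : m ≤ 2*h)
    (hα : 0 < α) (hη0 : 0 < η) (hηα : η ≤ α) :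
    |α * (Real.exp (-(2*h)*η) * (Real.exp ((2*h-1)*η^2/α) - 1))|
      ≤ |2*h-1| * (η^2 * Real.exp (-(m*η))) := by
  have hax : α * ((2*h-1)*η^2/α) = (2*h-1)*η^2 := by field_simp
  have hE : 0 < Real.exp (-(2*h)*η) := Real.exp_pos _
  rw [abs_mul, abs_mul, abs_of_nonneg hα.le, abs_of_nonneg hE.le, ← mul_assoc]
  rcases le_or_gt 0 (2*h-1) with hc | hc
  · have hx0 : 0 ≤ (2*h-1)*η^2/α := div_nonneg (mul_nonneg hc (sq_nonneg _)) hα.le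
    have hxle : (2*h-1)*η^2/α ≤ (2*h-1)*η := by
      rw [div_le_iff₀ hα]
      nlinarith [mul_nonneg hc hη0.le]
    have hee : Real.exp (-((2*h-1)*η^2/α)) * Real.exp ((2*h-1)*η^2/α) = 1 := by
      rw [← Real.exp_add]; simp
    have h1 : Real.exp ((2*h-1)*η^2/α) - 1
        ≤ ((2*h-1)*η^2/α) * Real.exp ((2*h-1)*η^2/α) := by
      nlinarith [Real.add_one_le_exp (-((2*h-1)*η^2/α)), Real.exp_pos ((2*h-1)*η^2/α)]
    have habs : |Real.exp ((2*h-1)*η^2/α) - 1|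
        ≤ ((2*h-1)*η^2/α) * Real.exp ((2*h-1)*η) := by
      rw [abs_of_nonneg (by linarith [Real.one_le_exp hx0])]
      exact le_trans h1 (mul_le_mul_of_nonneg_left (Real.exp_le_exp.2 hxle) hx0)
    calc α * Real.exp (-(2*h)*η) * |Real.exp ((2*h-1)*η^2/α) - 1|
        ≤ α * Real.exp (-(2*h)*η) * (((2*h-1)*η^2/α) * Real.exp ((2*h-1)*η)) :=
          mul_le_mul_of_nonneg_left habs (by positivity)
      _ = (2*h-1)*η^2 * (Real.exp (-(2*h)*η) * Real.exp ((2*h-1)*η)) := by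
          have hα' : α ≠ 0 := ne_of_gt hα
          field_simp
      _ = (2*h-1)*η^2 * Real.exp (-η) := by
          rw [← Real.exp_add]
          congr 1
          ring
      _ ≤ |2*h-1| * (η^2 * Real.exp (-(m*η))) := by
          rw [abs_of_nonneg hc]
          have hxm : Real.exp (-η) ≤ Real.exp (-(m*η)) :=
            Real.exp_le_exp.2 (by nlinarith)
          have hnn : (0:ℝ) ≤ (2*h-1)*η^2 := mul_nonneg hc (sq_nonneg _)
          calc (2*h-1)*η^2 * Real.exp (-η) ≤ (2*h-1)*η^2 * Real.exp (-(m*η)) :=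
                mul_le_mul_of_nonneg_left hxm hnn
            _ = (2*h-1) * (η^2 * Real.exp (-(m*η))) := by ring
  · have hx0 : (2*h-1)*η^2/α ≤ 0 := by
      apply div_nonpos_of_nonpos_of_nonneg _ hα.le
      nlinarith [sq_nonneg η]
    have habs : |Real.exp ((2*h-1)*η^2/α) - 1| ≤ -((2*h-1)*η^2/α) := by
      rw [abs_of_nonpos (by linarith [Real.exp_le_one_iff.2 hx0])]
      linarith [Real.add_one_le_exp ((2*h-1)*η^2/α)]
    calc α * Real.exp (-(2*h)*η) * |Real.exp ((2*h-1)*η^2/α) - 1|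
        ≤ α * Real.exp (-(2*h)*η) * (-((2*h-1)*η^2/α)) :=
          mul_le_mul_of_nonneg_left habs (by positivity)
      _ = -((2*h-1)*η^2) * Real.exp (-(2*h)*η) := by
          rw [show α * Real.exp (-(2*h)*η) * (-((2*h-1)*η^2/α))
              = -(α * ((2*h-1)*η^2/α)) * Real.exp (-(2*h)*η) by ring, hax]
      _ = |2*h-1| * η^2 * Real.exp (-(2*h)*η) := by
          rw [abs_of_neg hc]; ring
      _ ≤ |2*h-1| * (η^2 * Real.exp (-(m*η))) := by
          have hxm : Real.exp (-(2*h)*η) ≤ Real.exp (-(m*η)) :=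
            Real.exp_le_exp.2 (by nlinarith)
          have hnn : (0:ℝ) ≤ |2*h-1| * η^2 := by positivity
          calc |2*h-1| * η^2 * Real.exp (-(2*h)*η)
              ≤ |2*h-1| * η^2 * Real.exp (-(m*η)) := mul_le_mul_of_nonneg_left hxm hnn
            _ = |2*h-1| * (η^2 * Real.exp (-(m*η))) := by ring

private lemma aux_main (h : ℝ) (hh0 : 0 < h) (hh1 : h ≤ 1) :
    Tendsto (fun α : ℝ =>
      ((∫ η in (0:ℝ)..α, Real.exp (-2*h*η + (2*h-1)*η^2/α)) - 1/(2*h)) * α)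
      atTop (nhds ((2*h-1)/(4*h^3))) := by
  have hm : 0 < min 1 (2*h) := lt_min one_pos (by positivity)
  have key : Tendsto (fun α : ℝ => ∫ η, (Set.Ioc (0:ℝ) α).indicator
        (fun η => α * (Real.exp (-(2*h)*η) * (Real.exp ((2*h-1)*η^2/α) - 1))) η
        ∂(volume.restrict (Set.Ioi 0))) atTop
      (nhds (∫ η in Set.Ioi (0:ℝ), Real.exp (-(2*h)*η) * ((2*h-1)*η^2))) := by
    refine tendsto_integral_filter_of_dominated_convergence
      (fun η => |2*h-1| * (η^2 * Real.exp (-(min 1 (2*h)*η)))) ?_ ?_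
      (aux_g_int (2*h-1) _ hm) ?_
    · refine Eventually.of_forall fun α => ?_
      exact (Continuous.aestronglyMeasurable (by fun_prop)).indicator measurableSet_Ioc
    · filter_upwards [eventually_gt_atTop 0] with α hα
      refine (ae_restrict_iff' measurableSet_Ioi).2 (ae_of_all _ fun η hη => ?_)
      by_cases hmem : η ∈ Set.Ioc 0 α
      · rw [Set.indicator_of_mem hmem, Real.norm_eq_abs]
        exact aux_bound h (min 1 (2*h)) α η hh0 (min_le_left _ _) (min_le_right _ _)
          hα hmem.1 hmem.2
      · rw [Set.indicator_of_notMem hmem, norm_zero]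
        positivity
    · refine (ae_restrict_iff' measurableSet_Ioi).2 (ae_of_all _ fun η hη => ?_)
      have hk := (aux_ptwise ((2*h-1)*η^2)).const_mul (Real.exp (-(2*h)*η))
      refine hk.congr' ?_
      filter_upwards [eventually_gt_atTop 0, eventually_ge_atTop η] with α hα hle
      rw [Set.indicator_of_mem (show η ∈ Set.Ioc 0 α from ⟨hη, hle⟩)
        (fun η => α * (Real.exp (-(2*h)*η) * (Real.exp ((2*h-1)*η^2/α) - 1)))]
      ring
  rw [aux_value h (2*h-1) hh0] at key
  have comb := key.sub (aux_tail h hh0)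
  rw [sub_zero] at comb
  refine comb.congr' ?_
  filter_upwards [eventually_gt_atTop 0] with α hα
  have e1 : ∀ η : ℝ, Real.exp (-2*h*η + (2*h-1)*η^2/α)
      = Real.exp (-(2*h)*η) * (Real.exp ((2*h-1)*η^2/α) - 1) + Real.exp (-(2*h)*η) := by
    intro η
    rw [mul_sub, mul_one, sub_add_cancel, ← Real.exp_add]
    congr 1
    ring
  have int1 : IntervalIntegrable
      (fun η => Real.exp (-(2*h)*η) * (Real.exp ((2*h-1)*η^2/α) - 1)) volume 0 α :=
    (by fun_prop : Continuous fun η : ℝ =>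
      Real.exp (-(2*h)*η) * (Real.exp ((2*h-1)*η^2/α) - 1)).intervalIntegrable _ _
  have int2 : IntervalIntegrable (fun η : ℝ => Real.exp (-(2*h)*η)) volume 0 α :=
    (by fun_prop : Continuous fun η : ℝ => Real.exp (-(2*h)*η)).intervalIntegrable _ _
  have e2 : ∫ η in (0:ℝ)..α, Real.exp (-2*h*η + (2*h-1)*η^2/α)
      = (∫ η in (0:ℝ)..α, Real.exp (-(2*h)*η) * (Real.exp ((2*h-1)*η^2/α) - 1))
        + (1/(2*h) - Real.exp (-(2*h)*α)/(2*h)) := by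
    rw [← aux_exp_interval h α hh0, ← intervalIntegral.integral_add int1 int2]
    exact intervalIntegral.integral_congr fun η _ => e1 η
  have e3 : (∫ η in (0:ℝ)..α, Real.exp (-(2*h)*η) * (Real.exp ((2*h-1)*η^2/α) - 1)) * α
      = ∫ η, (Set.Ioc (0:ℝ) α).indicator
        (fun η => α * (Real.exp (-(2*h)*η) * (Real.exp ((2*h-1)*η^2/α) - 1))) η
        ∂(volume.restrict (Set.Ioi 0)) := by
    rw [mul_comm, ← intervalIntegral.integral_const_mul,
      MeasureTheory.integral_indicator measurableSet_Ioc,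
      Measure.restrict_restrict measurableSet_Ioc,
      Set.inter_eq_self_of_subset_left Set.Ioc_subset_Ioi_self,
      intervalIntegral.integral_of_le hα.le]
  rw [e2, ← e3]
  ring

/-- For fixed `0 < h ≤ 1`, as `α → ∞`,
`∫₀^α e^{-2hη + (2h−1)η²/α} dη − 1/(2h)` is asymptotically `(2h−1)/(4h³α)`
when `h ≠ 1/2`; for `h = 1/2` the difference is `o(1/α)`. -/
theorem scale_integral_refined_asymptotic (h : ℝ) (hh0 : 0 < h) (hh1 : h ≤ 1) :
    (h ≠ 1 / 2 →
      Tendsto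
        (fun α : ℝ =>
          ((∫ η in (0 : ℝ)..α,
              Real.exp (-2 * h * η + (2 * h - 1) * η ^ 2 / α)) - 1 / (2 * h)) /
            ((2 * h - 1) / (4 * h ^ 3 * α)))
        atTop (nhds 1))
    ∧
    (h = 1 / 2 →
      Tendsto
        (fun α : ℝ =>
          ((∫ η in (0 : ℝ)..α,
              Real.exp (-2 * h * η + (2 * h - 1) * η ^ 2 / α)) - 1 / (2 * h)) * α)
        atTop (nhds 0)) := by
  constructor
  · intro hne
    have hc : 2*h-1 ≠ 0 := fun h0 => hne (by linarith)
    have hh0' : h ≠ 0 := ne_of_gt hh0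
    have hmain := (aux_main h hh0 hh1).mul_const ((4*h^3)/(2*h-1))
    have hval : (2*h-1)/(4*h^3) * ((4*h^3)/(2*h-1)) = 1 := by
      field_simp
    rw [hval] at hmain
    refine hmain.congr' ?_
    filter_upwards [eventually_gt_atTop 0] with α hα
    have hα0 : α ≠ 0 := ne_of_gt hα
    set I := ∫ η in (0:ℝ)..α, Real.exp (-2*h*η + (2*h-1)*η^2/α) with hI
    field_simp
  · intro h2
    have hmain := aux_main h hh0 hh1
    subst h2
    rw [show (2*(1/2:ℝ)-1)/(4*(1/2:ℝ)^3) = 0 by norm_num] at hmain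
    exact hmain
end

section
/- For every α > 1, ∫_0^{√α} ∫_0^ξ (1/(ξη)) e^{η² − ξ²} (∫_0^η e^{-ζ²} dζ)² (∫_ξ^∞ e^{-ζ²} dζ)² dη dξ is finite, and as α → ∞ it converges to the finite limit ∫_0^∞ ∫_0^ξ (1/(ξη)) e^{η² − ξ²} (∫_0^η e^{-ζ²} dζ)² (∫_ξ^∞ e^{-ζ²} dζ)² dη dξ. -/
open Real Filter MeasureTheory Set

lemma gauss_integrable : Integrable (fun x : ℝ => Real.exp (-x ^ 2)) := by
  simpa using integrable_exp_neg_mul_sq (one_pos)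

lemma B_anti : Antitone (fun ξ : ℝ => ∫ ζ in Ioi ξ, Real.exp (-ζ ^ 2)) := by
  intro a b hab
  apply setIntegral_mono_set gauss_integrable.integrableOn
  · exact ae_of_all _ fun x => (exp_pos _).le
  · exact HasSubset.Subset.eventuallyLE (Ioi_subset_Ioi hab)

lemma B_nonneg (ξ : ℝ) : 0 ≤ ∫ ζ in Ioi ξ, Real.exp (-ζ ^ 2) :=
  setIntegral_nonneg measurableSet_Ioi fun x _ => (exp_pos _).le

lemma B_le_one {ξ : ℝ} (hξ : 0 ≤ ξ) : (∫ ζ in Ioi ξ, Real.exp (-ζ ^ 2)) ≤ 1 := by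
  have h0 : (∫ ζ in Ioi (0:ℝ), Real.exp (-ζ ^ 2)) = Real.sqrt (π / 1) / 2 := by
    simpa using integral_gaussian_Ioi 1
  have h2 : Real.sqrt π ≤ 2 := by
    rw [show (2:ℝ) = Real.sqrt 4 by rw [show (4:ℝ) = 2^2 by norm_num, Real.sqrt_sq two_pos.le]]
    exact Real.sqrt_le_sqrt pi_le_four
  calc (∫ ζ in Ioi ξ, Real.exp (-ζ ^ 2)) ≤ ∫ ζ in Ioi (0:ℝ), Real.exp (-ζ ^ 2) := B_anti hξ
    _ ≤ 1 := by rw [h0]; simp; linarith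

lemma deriv_integral (ξ : ℝ) : ∫ ζ in Ioi ξ, 2 * ζ * Real.exp (-ζ ^ 2) = Real.exp (-ξ ^ 2) := by
  have hint : IntegrableOn (fun ζ : ℝ => 2 * ζ * Real.exp (-ζ ^ 2)) (Ioi ξ) := by
    have := (integrable_mul_exp_neg_mul_sq one_pos).const_mul 2
    simpa [mul_assoc] using this.integrableOn
  have hderiv : ∀ x ∈ Ici ξ, HasDerivAt (fun ζ : ℝ => -Real.exp (-ζ ^ 2))
      (2 * x * Real.exp (-x ^ 2)) x := by
    intro x _
    have h := (((hasDerivAt_pow 2 x).neg).exp).neg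
    refine h.congr_deriv ?_
    simp
    ring
  have htend : Tendsto (fun ζ : ℝ => -Real.exp (-ζ ^ 2)) atTop (nhds 0) := by
    rw [show (0:ℝ) = -0 by norm_num]
    apply Tendsto.neg
    apply Real.tendsto_exp_atBot.comp
    exact tendsto_neg_atTop_atBot.comp (tendsto_pow_atTop two_ne_zero)
  have := integral_Ioi_of_hasDerivAt_of_tendsto' hderiv hint htend
  rw [this]; ring

lemma B_tail {ξ : ℝ} (hξ : 0 < ξ) :
    (∫ ζ in Ioi ξ, Real.exp (-ζ ^ 2)) ≤ Real.exp (-ξ ^ 2) / (2 * ξ) := by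
  rw [le_div_iff₀ (by positivity)]
  have h1 : (∫ ζ in Ioi ξ, Real.exp (-ζ ^ 2)) * (2 * ξ)
      = ∫ ζ in Ioi ξ, 2 * ξ * Real.exp (-ζ ^ 2) := by
    rw [integral_const_mul]; ring
  rw [h1, ← deriv_integral ξ]
  apply setIntegral_mono_on (gauss_integrable.const_mul _).integrableOn
  · have := (integrable_mul_exp_neg_mul_sq one_pos).const_mul 2
    simpa [mul_assoc] using this.integrableOn
  · exact measurableSet_Ioi
  · intro x hx
    have : ξ ≤ x := le_of_lt hx
    nlinarith [(exp_pos (-x^2)).le]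

lemma A_nonneg {η : ℝ} (hη : 0 ≤ η) : 0 ≤ ∫ ζ in (0:ℝ)..η, Real.exp (-ζ ^ 2) :=
  intervalIntegral.integral_nonneg hη fun x _ => (exp_pos _).le

lemma A_le {η : ℝ} (hη : 0 ≤ η) : (∫ ζ in (0:ℝ)..η, Real.exp (-ζ ^ 2)) ≤ η := by
  calc (∫ ζ in (0:ℝ)..η, Real.exp (-ζ ^ 2)) ≤ ∫ _ in (0:ℝ)..η, (1:ℝ) := by
        apply intervalIntegral.integral_mono_on hη
          ((Continuous.intervalIntegrable (by continuity) _ _)) intervalIntegrable_const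
        intro x _
        rw [show (1:ℝ) = Real.exp 0 by simp]
        exact Real.exp_le_exp.2 (by nlinarith)
    _ = η := by simp


/-- The integrand of the limiting rescaled variance of the fixation time of a
recessive sweep. -/
noncomputable def recessiveVarIntegrand (p : ℝ × ℝ) : ℝ :=
  (1 / (p.1 * p.2)) * Real.exp (p.2 ^ 2 - p.1 ^ 2) *
    (∫ ζ in (0 : ℝ)..p.2, Real.exp (-ζ ^ 2)) ^ 2 *
    (∫ ζ in Ioi p.1, Real.exp (-ζ ^ 2)) ^ 2

lemma f_meas : Measurable recessiveVarIntegrand := by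
  unfold recessiveVarIntegrand
  apply Measurable.mul
  apply Measurable.mul
  apply Measurable.mul
  · exact measurable_const.div (measurable_fst.mul measurable_snd)
  · exact (Real.continuous_exp.comp
      ((continuous_snd.pow 2).sub (continuous_fst.pow 2))).measurable
  · exact (((intervalIntegral.continuous_primitive
        (fun a b => Continuous.intervalIntegrable (by continuity) a b) 0).comp
        continuous_snd).measurable).pow measurable_const
  · exact ((B_anti.measurable).comp measurable_fst).pow measurable_const

lemma f_nonneg {p : ℝ × ℝ} (h2 : 0 < p.2) (h21 : p.2 ≤ p.1) :
    0 ≤ recessiveVarIntegrand p := by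
  have h1 : 0 < p.1 := lt_of_lt_of_le h2 h21
  unfold recessiveVarIntegrand
  positivity

lemma f_upper {p : ℝ × ℝ} (h2 : 0 < p.2) (h21 : p.2 ≤ p.1) :
    recessiveVarIntegrand p ≤
      Real.exp 2 * (Real.exp (-p.1 ^ 2) * Real.exp (-p.2 ^ 2)) := by
  obtain ⟨ξ, η⟩ := p
  simp only at h2 h21 ⊢
  have hξ : 0 < ξ := lt_of_lt_of_le h2 h21
  set A := ∫ ζ in (0:ℝ)..η, Real.exp (-ζ ^ 2) with hA
  set B := ∫ ζ in Ioi ξ, Real.exp (-ζ ^ 2) with hB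
  have hA0 : 0 ≤ A := A_nonneg h2.le
  have hAle : A ≤ η := A_le h2.le
  have hB0 : 0 ≤ B := B_nonneg ξ
  have hE : Real.exp (η ^ 2 - ξ ^ 2) ≤ 1 := by
    rw [show (1:ℝ) = Real.exp 0 by simp]
    exact Real.exp_le_exp.2 (by nlinarith)
  have step1 : recessiveVarIntegrand (ξ, η) ≤
      1 / (ξ * η) * Real.exp (η ^ 2 - ξ ^ 2) * η ^ 2 * B ^ 2 := by
    unfold recessiveVarIntegrand
    simp only [← hA, ← hB]
    have : A ^ 2 ≤ η ^ 2 := pow_le_pow_left₀ hA0 hAle 2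
    have hc : (0:ℝ) ≤ 1 / (ξ * η) * Real.exp (η ^ 2 - ξ ^ 2) := by positivity
    nlinarith [sq_nonneg B, mul_le_mul_of_nonneg_left this hc, sq_nonneg A]
  rcases le_or_gt ξ 1 with hcase | hcase
  · -- small ξ : use B ≤ 1
    have hB1 : B ≤ 1 := B_le_one hξ.le
    have h3 : 1 / (ξ * η) * Real.exp (η ^ 2 - ξ ^ 2) * η ^ 2 * B ^ 2 ≤ 1 := by
      have heq : 1 / (ξ * η) * Real.exp (η ^ 2 - ξ ^ 2) * η ^ 2 * B ^ 2
          = (η / ξ) * (Real.exp (η ^ 2 - ξ ^ 2) * B ^ 2) := by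
        field_simp
      rw [heq]
      have h4 : η / ξ ≤ 1 := div_le_one_of_le₀ h21 hξ.le
      have h5 : Real.exp (η ^ 2 - ξ ^ 2) * B ^ 2 ≤ 1 := by
        nlinarith [(exp_pos (η ^ 2 - ξ ^ 2)).le]
      nlinarith [div_nonneg h2.le hξ.le, (exp_pos (η ^ 2 - ξ ^ 2)).le, sq_nonneg B]
    have h6 : (1:ℝ) ≤ Real.exp 2 * (Real.exp (-ξ ^ 2) * Real.exp (-η ^ 2)) := by
      rw [← Real.exp_add, ← Real.exp_add, show (1:ℝ) = Real.exp 0 by simp]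
      exact Real.exp_le_exp.2 (by nlinarith)
    linarith [step1]
  · -- large ξ : use the tail bound
    have hξ0 : ξ ≠ 0 := hξ.ne'
    have hη0 : η ≠ 0 := h2.ne'
    have hBt : B ≤ Real.exp (-ξ ^ 2) / (2 * ξ) := B_tail hξ
    have step2 : 1 / (ξ * η) * Real.exp (η ^ 2 - ξ ^ 2) * η ^ 2 * B ^ 2 ≤
        1 / (ξ * η) * Real.exp (η ^ 2 - ξ ^ 2) * η ^ 2 * (Real.exp (-ξ ^ 2) / (2 * ξ)) ^ 2 := by
      have hc : (0:ℝ) ≤ 1 / (ξ * η) * Real.exp (η ^ 2 - ξ ^ 2) * η ^ 2 := by positivity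
      exact mul_le_mul_of_nonneg_left (pow_le_pow_left₀ hB0 hBt 2) hc
    have e2 : Real.exp (η ^ 2 - ξ ^ 2) * (Real.exp (-ξ ^ 2) * Real.exp (-ξ ^ 2))
        = Real.exp (η ^ 2 - 3 * ξ ^ 2) := by
      rw [← Real.exp_add, ← Real.exp_add]
      congr 1
      ring
    have heq : 1 / (ξ * η) * Real.exp (η ^ 2 - ξ ^ 2) * η ^ 2 * (Real.exp (-ξ ^ 2) / (2 * ξ)) ^ 2
        = η / (4 * ξ ^ 3) * Real.exp (η ^ 2 - 3 * ξ ^ 2) := by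
      rw [← e2]
      field_simp
      ring
    have h7 : η / (4 * ξ ^ 3) ≤ 1 := by
      rw [div_le_one (by positivity)]
      nlinarith
    have h8 : Real.exp (η ^ 2 - 3 * ξ ^ 2) ≤ Real.exp (-ξ ^ 2 + -η ^ 2) :=
      Real.exp_le_exp.2 (by nlinarith)
    have h9 : η / (4 * ξ ^ 3) * Real.exp (η ^ 2 - 3 * ξ ^ 2)
        ≤ Real.exp (-ξ ^ 2 + -η ^ 2) := by
      have := mul_le_mul h7 h8 (exp_pos _).le zero_le_one
      simpa using this
    have h10 : Real.exp (-ξ ^ 2 + -η ^ 2) ≤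
        Real.exp 2 * (Real.exp (-ξ ^ 2) * Real.exp (-η ^ 2)) := by
      rw [← Real.exp_add, ← Real.exp_add]
      exact Real.exp_le_exp.2 (by nlinarith)
    calc recessiveVarIntegrand (ξ, η)
        ≤ 1 / (ξ * η) * Real.exp (η ^ 2 - ξ ^ 2) * η ^ 2 * B ^ 2 := step1
      _ ≤ 1 / (ξ * η) * Real.exp (η ^ 2 - ξ ^ 2) * η ^ 2
            * (Real.exp (-ξ ^ 2) / (2 * ξ)) ^ 2 := step2
      _ = η / (4 * ξ ^ 3) * Real.exp (η ^ 2 - 3 * ξ ^ 2) := heq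
      _ ≤ Real.exp (-ξ ^ 2 + -η ^ 2) := h9
      _ ≤ Real.exp 2 * (Real.exp (-ξ ^ 2) * Real.exp (-η ^ 2)) := h10

lemma S_meas : MeasurableSet {p : ℝ × ℝ | 0 < p.2 ∧ p.2 ≤ p.1} :=
  (measurableSet_lt measurable_const measurable_snd).inter
    (measurableSet_le measurable_snd measurable_fst)

lemma Sa_meas (α : ℝ) :
    MeasurableSet {p : ℝ × ℝ | 0 < p.2 ∧ p.2 ≤ p.1 ∧ p.1 ≤ Real.sqrt α} :=
  (measurableSet_lt measurable_const measurable_snd).inter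
    ((measurableSet_le measurable_snd measurable_fst).inter
      (measurableSet_le measurable_fst measurable_const))

lemma main_integrable :
    IntegrableOn recessiveVarIntegrand {p : ℝ × ℝ | 0 < p.2 ∧ p.2 ≤ p.1} := by
  have hg : Integrable (fun p : ℝ × ℝ =>
      Real.exp 2 * (Real.exp (-p.1 ^ 2) * Real.exp (-p.2 ^ 2))) := by
    have : Integrable (fun p : ℝ × ℝ => Real.exp (-p.1 ^ 2) * Real.exp (-p.2 ^ 2)) := by
      rw [show (volume : Measure (ℝ × ℝ)) = volume.prod volume from Measure.volume_eq_prod ℝ ℝ]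
      exact gauss_integrable.mul_prod gauss_integrable
    exact this.const_mul _
  apply Integrable.mono' hg.integrableOn (f_meas.aestronglyMeasurable.restrict)
  rw [ae_restrict_iff' S_meas]
  apply ae_of_all
  rintro p ⟨h2, h21⟩
  rw [Real.norm_eq_abs, abs_of_nonneg (f_nonneg h2 h21)]
  exact f_upper h2 h21

/-- For every `α > 1` the truncated double integral (over `0 < η ≤ ξ ≤ √α`) is
finite, and as `α → ∞` it converges to the finite full double integral over
`0 < η ≤ ξ < ∞`. -/
theorem recessive_variance_integral_finite_and_tendsto :
    (∀ α : ℝ, 1 < α →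
      IntegrableOn recessiveVarIntegrand
        {p : ℝ × ℝ | 0 < p.2 ∧ p.2 ≤ p.1 ∧ p.1 ≤ Real.sqrt α})
    ∧ IntegrableOn recessiveVarIntegrand {p : ℝ × ℝ | 0 < p.2 ∧ p.2 ≤ p.1}
    ∧ Tendsto
        (fun α : ℝ =>
          ∫ p in {p : ℝ × ℝ | 0 < p.2 ∧ p.2 ≤ p.1 ∧ p.1 ≤ Real.sqrt α},
            recessiveVarIntegrand p)
        atTop
        (nhds (∫ p in {p : ℝ × ℝ | 0 < p.2 ∧ p.2 ≤ p.1},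
          recessiveVarIntegrand p)) := by
  have hsub : ∀ α : ℝ, {p : ℝ × ℝ | 0 < p.2 ∧ p.2 ≤ p.1 ∧ p.1 ≤ Real.sqrt α}
      ⊆ {p : ℝ × ℝ | 0 < p.2 ∧ p.2 ≤ p.1} := fun α p hp => ⟨hp.1, hp.2.1⟩
  refine ⟨fun α _ => main_integrable.mono_set (hsub α), main_integrable, ?_⟩
  have h1 : ∀ α : ℝ, (∫ p in {p : ℝ × ℝ | 0 < p.2 ∧ p.2 ≤ p.1 ∧ p.1 ≤ Real.sqrt α},
      recessiveVarIntegrand p)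
      = ∫ p, ({p : ℝ × ℝ | 0 < p.2 ∧ p.2 ≤ p.1 ∧ p.1 ≤ Real.sqrt α}).indicator
          recessiveVarIntegrand p := fun α => (integral_indicator (Sa_meas α)).symm
  have h2 : (∫ p in {p : ℝ × ℝ | 0 < p.2 ∧ p.2 ≤ p.1}, recessiveVarIntegrand p)
      = ∫ p, ({p : ℝ × ℝ | 0 < p.2 ∧ p.2 ≤ p.1}).indicator recessiveVarIntegrand p :=
    (integral_indicator S_meas).symm
  simp only [h1, h2]
  apply tendsto_integral_filter_of_dominated_convergence
    (bound := ({p : ℝ × ℝ | 0 < p.2 ∧ p.2 ≤ p.1}).indicator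
      (fun p => ‖recessiveVarIntegrand p‖))
  · exact Eventually.of_forall fun α =>
      (f_meas.indicator (Sa_meas α)).aestronglyMeasurable
  · refine Eventually.of_forall fun α => ae_of_all _ fun p => ?_
    calc ‖({p : ℝ × ℝ | 0 < p.2 ∧ p.2 ≤ p.1 ∧ p.1 ≤ Real.sqrt α}).indicator
            recessiveVarIntegrand p‖
        ≤ ‖({p : ℝ × ℝ | 0 < p.2 ∧ p.2 ≤ p.1}).indicator recessiveVarIntegrand p‖ :=
          norm_indicator_le_of_subset (hsub α) _ p
      _ = ({p : ℝ × ℝ | 0 < p.2 ∧ p.2 ≤ p.1}).indicator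
            (fun p => ‖recessiveVarIntegrand p‖) p := norm_indicator_eq_indicator_norm _ _
  · exact (integrable_indicator_iff S_meas).2 main_integrable.norm
  · apply ae_of_all
    intro p
    by_cases hp : p ∈ {p : ℝ × ℝ | 0 < p.2 ∧ p.2 ≤ p.1}
    · rw [indicator_of_mem hp]
      apply Tendsto.congr' _ tendsto_const_nhds
      filter_upwards [eventually_ge_atTop (p.1 ^ 2)] with α hα
      have hp1 : 0 ≤ p.1 := le_trans hp.1.le hp.2
      have : p.1 ≤ Real.sqrt α := by
        rw [show p.1 = Real.sqrt (p.1 ^ 2) from (Real.sqrt_sq hp1).symm]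
        exact Real.sqrt_le_sqrt hα
      have hmem : p ∈ {p : ℝ × ℝ | 0 < p.2 ∧ p.2 ≤ p.1 ∧ p.1 ≤ Real.sqrt α} :=
        ⟨hp.1, hp.2, this⟩
      exact (indicator_of_mem hmem _).symm
    · rw [indicator_of_notMem hp]
      have : ∀ α : ℝ, ({p : ℝ × ℝ | 0 < p.2 ∧ p.2 ≤ p.1 ∧ p.1 ≤ Real.sqrt α}).indicator
          recessiveVarIntegrand p = 0 := fun α =>
        indicator_of_notMem (fun h => hp (hsub α h)) _
      simp only [this]
      exact tendsto_const_nhds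
end

section
/- The double integral ∫_0^∞ ∫_0^η (1/(ξη)) e^{-ξ² − η²} (∫_0^ξ e^{ζ²} dζ)² dξ dη is finite. -/
open Real MeasureTheory

open intervalIntegral


lemma expsq_intInt (a b : ℝ) : IntervalIntegrable (fun t : ℝ => Real.exp (t ^ 2)) volume a b :=
  (Real.continuous_exp.comp (continuous_pow 2)).intervalIntegrable a b

lemma I_nonneg (x : ℝ) (hx : 0 ≤ x) : 0 ≤ ∫ ζ in (0:ℝ)..x, Real.exp (ζ ^ 2) :=
  intervalIntegral.integral_nonneg hx (fun t _ => (Real.exp_pos _).le)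

lemma I_le_mul (x : ℝ) (hx : 0 ≤ x) :
    (∫ ζ in (0:ℝ)..x, Real.exp (ζ ^ 2)) ≤ x * Real.exp (x ^ 2) := by
  have h : (∫ ζ in (0:ℝ)..x, Real.exp (ζ ^ 2)) ≤ ∫ _ in (0:ℝ)..x, Real.exp (x ^ 2) := by
    apply intervalIntegral.integral_mono_on hx (expsq_intInt 0 x)
      (intervalIntegrable_const)
    intro t ht
    exact Real.exp_le_exp.2 (by nlinarith [ht.1, ht.2])
  simpa using h.trans_eq (by simp [mul_comm])

lemma I_le_div (x : ℝ) (hx : 0 < x) :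
    (∫ ζ in (0:ℝ)..x, Real.exp (ζ ^ 2)) ≤ Real.exp (x ^ 2) / x := by
  have h : (∫ ζ in (0:ℝ)..x, Real.exp (ζ ^ 2)) ≤ ∫ t in (0:ℝ)..x, Real.exp (x * t) := by
    apply intervalIntegral.integral_mono_on hx.le (expsq_intInt 0 x)
      ((Real.continuous_exp.comp (continuous_const.mul continuous_id)).intervalIntegrable 0 x)
    intro t ht
    show Real.exp (t ^ 2) ≤ Real.exp (x * t)
    exact Real.exp_le_exp.2 (by nlinarith [ht.1, ht.2])
  have hcalc : (∫ t in (0:ℝ)..x, Real.exp (x * t)) = x⁻¹ * (Real.exp (x * x) - 1) := by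
    rw [intervalIntegral.integral_comp_mul_left Real.exp hx.ne', mul_zero]
    simp [integral_exp]
  rw [hcalc] at h
  refine h.trans ?_
  rw [div_eq_inv_mul, ← sq, pow_two]
  have := Real.exp_pos (x * x)
  nlinarith [inv_pos.2 hx]

lemma quartic_integrable : Integrable fun x : ℝ => (1 + x ^ 4)⁻¹ := by
  refine (integrable_inv_one_add_sq.const_mul 2).mono' ?_ ?_
  · exact (Continuous.inv₀ (by continuity) (fun x => by positivity)).aestronglyMeasurable
  · refine Filter.Eventually.of_forall fun x => ?_
    rw [Real.norm_eq_abs, abs_of_nonneg (by positivity)]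
    calc (1 + x ^ 4)⁻¹ ≤ ((1 + x ^ 2) / 2)⁻¹ :=
          inv_anti₀ (by positivity) (by nlinarith [sq_nonneg (x ^ 2 - 1)])
      _ = 2 * (1 + x ^ 2)⁻¹ := by rw [inv_div]; ring

lemma gauss_shift_integrable (x : ℝ) :
    Integrable fun y : ℝ => Real.exp (-(y - x) ^ 2) := by
  have h := integrable_exp_neg_mul_sq (b := 1) one_pos
  have h2 := h.comp_sub_right x
  simpa using h2

lemma G_integrable :
    Integrable (fun p : ℝ × ℝ => 2 * (1 + p.1 ^ 4)⁻¹ * Real.exp (-(p.2 - p.1) ^ 2)) := by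
  rw [Measure.volume_eq_prod]
  have hm : AEStronglyMeasurable
      (fun p : ℝ × ℝ => 2 * (1 + p.1 ^ 4)⁻¹ * Real.exp (-(p.2 - p.1) ^ 2))
      (volume.prod volume) := by
    apply Continuous.aestronglyMeasurable
    have : Continuous fun p : ℝ × ℝ => (1 + p.1 ^ 4)⁻¹ :=
      Continuous.inv₀ (by continuity) (fun p => by positivity)
    continuity
  rw [integrable_prod_iff hm]
  constructor
  · refine Filter.Eventually.of_forall fun x => ?_
    simpa [mul_assoc] using ((gauss_shift_integrable x).const_mul (2 * (1 + x ^ 4)⁻¹))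
  · have hcalc : ∀ x : ℝ, (∫ y : ℝ, ‖2 * (1 + x ^ 4)⁻¹ * Real.exp (-(y - x) ^ 2)‖)
        = 2 * (1 + x ^ 4)⁻¹ * ∫ y : ℝ, Real.exp (-y ^ 2) := by
      intro x
      have : ∀ y : ℝ, ‖2 * (1 + x ^ 4)⁻¹ * Real.exp (-(y - x) ^ 2)‖
          = 2 * (1 + x ^ 4)⁻¹ * Real.exp (-(y - x) ^ 2) := fun y => by
        rw [Real.norm_eq_abs, abs_of_nonneg (by positivity)]
      simp_rw [this]
      rw [MeasureTheory.integral_const_mul]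
      congr 1
      exact integral_sub_right_eq_self (fun y => Real.exp (-y ^ 2)) x
    simp_rw [hcalc]
    exact ((quartic_integrable.const_mul 2).mul_const _)

lemma ptbound (ξ η : ℝ) (h1 : 0 < ξ) (h2 : ξ < η) :
    1 / (ξ * η) * Real.exp (-ξ ^ 2 - η ^ 2) * (∫ ζ in (0:ℝ)..ξ, Real.exp (ζ ^ 2)) ^ 2
      ≤ 2 * (1 + ξ ^ 4)⁻¹ * Real.exp (-(η - ξ) ^ 2) := by
  set I := ∫ ζ in (0:ℝ)..ξ, Real.exp (ζ ^ 2) with hIdef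
  have hI0 : 0 ≤ I := I_nonneg ξ h1.le
  have hξη : 0 < ξ * η := mul_pos h1 (h1.trans h2)
  have hpos : (0:ℝ) < 1 + ξ ^ 4 := by positivity
  have hE : Real.exp (-ξ ^ 2 - η ^ 2)
      = Real.exp (ξ ^ 2 - η ^ 2) * Real.exp (-(2 * ξ ^ 2)) := by
    rw [← Real.exp_add]; ring_nf
  have hEle : Real.exp (ξ ^ 2 - η ^ 2) ≤ Real.exp (-(η - ξ) ^ 2) :=
    Real.exp_le_exp.2 (by nlinarith)
  set A := Real.exp (ξ ^ 2) with hAdef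
  have hA : 0 < A := Real.exp_pos _
  have he : (0:ℝ) < Real.exp (-(2 * ξ ^ 2)) := Real.exp_pos _
  have hprod : A ^ 2 * Real.exp (-(2 * ξ ^ 2)) = 1 := by
    rw [hAdef, sq, mul_assoc, ← Real.exp_add, ← Real.exp_add,
      show ξ ^ 2 + (ξ ^ 2 + -(2 * ξ ^ 2)) = 0 by ring, Real.exp_zero]
  have key : I ^ 2 * Real.exp (-(2 * ξ ^ 2)) ≤ 2 * (ξ * η) / (1 + ξ ^ 4) := by
    rw [le_div_iff₀ hpos]
    rcases le_total ξ 1 with h | h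
    · have hI1 : I ≤ ξ * A := I_le_mul ξ h1.le
      have hI2 : I ^ 2 ≤ (ξ * A) ^ 2 := pow_le_pow_left₀ hI0 hI1 2
      have hI2e : I ^ 2 * Real.exp (-(2 * ξ ^ 2)) ≤ ξ ^ 2 := by
        calc I ^ 2 * Real.exp (-(2 * ξ ^ 2)) ≤ (ξ * A) ^ 2 * Real.exp (-(2 * ξ ^ 2)) :=
              mul_le_mul_of_nonneg_right hI2 he.le
          _ = ξ ^ 2 := by rw [mul_pow, mul_assoc, hprod, mul_one]
      have hξ4 : ξ ^ 4 ≤ 1 ^ 4 := pow_le_pow_left₀ h1.le h 4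
      have hξ2 : ξ * ξ ≤ ξ * η := mul_le_mul_of_nonneg_left h2.le h1.le
      nlinarith [mul_le_mul_of_nonneg_right hI2e hpos.le, sq_nonneg ξ,
        mul_nonneg (mul_nonneg (sq_nonneg I) he.le) (by positivity : (0:ℝ) ≤ ξ ^ 4)]
    · have hI1 : I ≤ A / ξ := I_le_div ξ h1
      have hI2 : I ^ 2 ≤ (A / ξ) ^ 2 := pow_le_pow_left₀ hI0 hI1 2
      have hI2e : I ^ 2 * Real.exp (-(2 * ξ ^ 2)) ≤ 1 / ξ ^ 2 := by
        calc I ^ 2 * Real.exp (-(2 * ξ ^ 2)) ≤ (A / ξ) ^ 2 * Real.exp (-(2 * ξ ^ 2)) :=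
              mul_le_mul_of_nonneg_right hI2 he.le
          _ = 1 / ξ ^ 2 := by rw [div_pow, div_mul_eq_mul_div, hprod]
      have h4 : (1:ℝ) ^ 4 ≤ ξ ^ 4 := pow_le_pow_left₀ (by norm_num) h 4
      have h3 : ξ ^ 3 * ξ ≤ ξ ^ 3 * η := mul_le_mul_of_nonneg_left h2.le (by positivity)
      have hmain : (1 / ξ ^ 2) * (1 + ξ ^ 4) ≤ 2 * (ξ * η) := by
        rw [div_mul_eq_mul_div, one_mul, div_le_iff₀ (by positivity : (0:ℝ) < ξ ^ 2)]
        nlinarith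
      calc I ^ 2 * Real.exp (-(2 * ξ ^ 2)) * (1 + ξ ^ 4)
          ≤ (1 / ξ ^ 2) * (1 + ξ ^ 4) := mul_le_mul_of_nonneg_right hI2e hpos.le
        _ ≤ 2 * (ξ * η) := hmain
  calc 1 / (ξ * η) * Real.exp (-ξ ^ 2 - η ^ 2) * I ^ 2
      = I ^ 2 * Real.exp (-(2 * ξ ^ 2)) * Real.exp (ξ ^ 2 - η ^ 2) / (ξ * η) := by
        rw [hE]; ring
    _ ≤ 2 * (ξ * η) / (1 + ξ ^ 4) * Real.exp (-(η - ξ) ^ 2) / (ξ * η) := by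
        gcongr
    _ = 2 * (1 + ξ ^ 4)⁻¹ * Real.exp (-(η - ξ) ^ 2) := by
        field_simp
        ring_nf
        exact mul_inv_cancel₀ (h1.trans h2).ne'

/-- The double integral `∫₀^∞ ∫₀^η (1/(ξη)) e^{-ξ²−η²} (∫₀^ξ e^{ζ²} dζ)² dξ dη`
is finite: its integrand is integrable on `{0 < ξ < η}`. -/
theorem dominant_variance_integral_finite :
    IntegrableOn
      (fun p : ℝ × ℝ =>
        (1 / (p.1 * p.2)) * Real.exp (-p.1 ^ 2 - p.2 ^ 2) *
          (∫ ζ in (0 : ℝ)..p.1, Real.exp (ζ ^ 2)) ^ 2)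
      {p : ℝ × ℝ | 0 < p.1 ∧ p.1 < p.2} := by
  set S : Set (ℝ × ℝ) := {p : ℝ × ℝ | 0 < p.1 ∧ p.1 < p.2} with hS
  have hSopen : IsOpen S :=
    IsOpen.inter (isOpen_lt continuous_const continuous_fst)
      (isOpen_lt continuous_fst continuous_snd)
  have hImeas : Continuous fun x : ℝ => ∫ ζ in (0:ℝ)..x, Real.exp (ζ ^ 2) :=
    intervalIntegral.continuous_primitive (fun a b => expsq_intInt a b) 0
  have hcont : ContinuousOn
      (fun p : ℝ × ℝ =>
        (1 / (p.1 * p.2)) * Real.exp (-p.1 ^ 2 - p.2 ^ 2) *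
          (∫ ζ in (0 : ℝ)..p.1, Real.exp (ζ ^ 2)) ^ 2) S := by
    apply ContinuousOn.mul
    · apply ContinuousOn.mul
      · exact ContinuousOn.div continuousOn_const
          (continuous_fst.mul continuous_snd).continuousOn
          (fun p hp => (mul_pos hp.1 (hp.1.trans hp.2)).ne')
      · exact (Real.continuous_exp.comp
          (((continuous_fst.pow 2).neg).sub (continuous_snd.pow 2))).continuousOn
    · exact ((hImeas.comp continuous_fst).pow 2).continuousOn
  have hmf := hcont.aestronglyMeasurable (μ := volume) hSopen.measurableSet
  apply Integrable.mono' (G_integrable.integrableOn (s := S)) hmf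
  rw [ae_restrict_iff' hSopen.measurableSet]
  refine Filter.Eventually.of_forall fun p hp => ?_
  have hb := ptbound p.1 p.2 hp.1 hp.2
  have h0 : (0:ℝ) ≤ (1 / (p.1 * p.2)) * Real.exp (-p.1 ^ 2 - p.2 ^ 2) *
      (∫ ζ in (0 : ℝ)..p.1, Real.exp (ζ ^ 2)) ^ 2 :=
    mul_nonneg (mul_nonneg
      (le_of_lt (div_pos one_pos (mul_pos hp.1 (hp.1.trans hp.2)))) (Real.exp_pos _).le)
      (sq_nonneg _)
  rw [Real.norm_eq_abs, abs_of_nonneg h0]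
  exact hb
end

section
/- For 0 < h < 1, as α → ∞ one has ∫_0^α (1 − e^{-2hξ}) · [2(2h−1)/α] / (2h − 2(2h−1)ξ/α) dξ → log(2h) − log(2(1−h)) = log(h/(1−h)). -/
open Real Filter

/-- For `0 < h < 1`, as `α → ∞`,
`∫₀^α (1 − e^{-2hξ}) · (2(2h−1)/α) / (2h − 2(2h−1)ξ/α) dξ → log(h/(1−h))`. -/
theorem integral_dominance_correction_tendsto
    (h : ℝ) (hh0 : 0 < h) (hh1 : h < 1) :
    Tendsto
      (fun α : ℝ =>
        ∫ ξ in (0 : ℝ)..α,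
          (1 - Real.exp (-2 * h * ξ)) * (2 * (2 * h - 1) / α) /
            (2 * h - 2 * (2 * h - 1) * ξ / α))
      atTop (nhds (Real.log (h / (1 - h)))) := by
  set m := min h (1 - h) with hm
  have hm0 : 0 < m := lt_min hh0 (by linarith)
  set c : ℝ := 2 * (2 * h - 1) with hc
  set L : ℝ := Real.log (h / (1 - h)) with hL
  set K : ℝ := |c| / (2 * m) with hK
  have hKnn : 0 ≤ K := div_nonneg (abs_nonneg _) (by linarith)
  -- denominator lower bound
  have hden : ∀ α : ℝ, 0 < α → ∀ ξ ∈ Set.Icc (0:ℝ) α,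
      2 * m ≤ 2 * h - c * ξ / α := by
    intro α hα ξ hξ
    obtain ⟨h0, h1⟩ := hξ
    have ht0 : 0 ≤ ξ / α := div_nonneg h0 hα.le
    have ht1 : ξ / α ≤ 1 := (div_le_one hα).mpr h1
    have heq : 2 * h - c * ξ / α = 2 * h - c * (ξ / α) := by ring
    rw [heq, hc]
    rcases le_total h (1 - h) with hcm | hcm
    · rw [hm, min_eq_left hcm]; nlinarith
    · rw [hm, min_eq_right hcm]; nlinarith
  -- the error term
  set E : ℝ → ℝ := fun α =>
    ∫ ξ in (0:ℝ)..α, Real.exp (-2 * h * ξ) * (c / α) / (2 * h - c * ξ / α) with hE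
  -- facts for a fixed positive α
  have key : ∀ α : ℝ, 0 < α →
      (∫ ξ in (0:ℝ)..α,
          (1 - Real.exp (-2 * h * ξ)) * (c / α) / (2 * h - c * ξ / α))
        = L - E α ∧ |E α| ≤ K / (2 * h) / α := by
    intro α hα
    have huIcc : Set.uIcc (0:ℝ) α = Set.Icc 0 α := Set.uIcc_of_le hα.le
    have hdne : ∀ ξ ∈ Set.Icc (0:ℝ) α, 2 * h - c * ξ / α ≠ 0 := by
      intro ξ hξ
      have := hden α hα ξ hξ
      have h2m : (0:ℝ) < 2 * m := by linarith
      exact ne_of_gt (lt_of_lt_of_le h2m this)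
    have hdcont : Continuous (fun ξ : ℝ => 2 * h - c * ξ / α) := by fun_prop
    have hgcont : ContinuousOn (fun ξ : ℝ => (c / α) / (2 * h - c * ξ / α))
        (Set.uIcc 0 α) := by
      rw [huIcc]
      exact continuousOn_const.div hdcont.continuousOn hdne
    have hecont : ContinuousOn
        (fun ξ : ℝ => Real.exp (-2 * h * ξ) * (c / α) / (2 * h - c * ξ / α))
        (Set.uIcc 0 α) := by
      rw [huIcc]
      exact (((Real.continuous_exp.comp (by fun_prop)).continuousOn).mul
        continuousOn_const).div hdcont.continuousOn hdne
    have hgint : IntervalIntegrable (fun ξ : ℝ => (c / α) / (2 * h - c * ξ / α))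
        MeasureTheory.volume 0 α := hgcont.intervalIntegrable
    have heint : IntervalIntegrable
        (fun ξ : ℝ => Real.exp (-2 * h * ξ) * (c / α) / (2 * h - c * ξ / α))
        MeasureTheory.volume 0 α := hecont.intervalIntegrable
    -- exact value of the main term
    have hmain : (∫ ξ in (0:ℝ)..α, (c / α) / (2 * h - c * ξ / α)) = L := by
      have hder : ∀ ξ ∈ Set.uIcc (0:ℝ) α,
          HasDerivAt (fun ξ : ℝ => -Real.log (2 * h - c * ξ / α))
            ((c / α) / (2 * h - c * ξ / α)) ξ := by
        intro ξ hξ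
        rw [huIcc] at hξ
        have hu : HasDerivAt (fun ξ : ℝ => 2 * h - c * ξ / α) (-(c / α)) ξ := by
          have h1 : (fun ξ : ℝ => 2 * h - c * ξ / α)
              = fun ξ : ℝ => 2 * h - (c / α) * ξ := by funext x; ring
          rw [h1]
          simpa using ((hasDerivAt_id ξ).const_mul (c / α)).const_sub (2 * h)
        have := (hu.log (hdne ξ hξ)).neg
        exact this.congr_deriv (by ring)
      rw [intervalIntegral.integral_eq_sub_of_hasDerivAt hder hgint]
      have hαα : c * α / α = c := by field_simp
      rw [hαα]
      have h2h : (0:ℝ) < 2 * h := by linarith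
      have h2h1 : 2 * h - c = 2 * (1 - h) := by rw [hc]; ring
      have : -Real.log (2 * h - c) - -Real.log (2 * h - c * 0 / α)
          = Real.log (2 * h) - Real.log (2 * (1 - h)) := by
        rw [h2h1]; ring_nf
      rw [this, hL]
      rw [← Real.log_div (ne_of_gt (by linarith)) (ne_of_gt (by linarith))]
      congr 1
      rw [mul_div_mul_left _ _ (two_ne_zero)]
    -- split the integral
    constructor
    · have hsplit : ∀ ξ : ℝ,
          (1 - Real.exp (-2 * h * ξ)) * (c / α) / (2 * h - c * ξ / α)
            = (c / α) / (2 * h - c * ξ / α)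
              - Real.exp (-2 * h * ξ) * (c / α) / (2 * h - c * ξ / α) := by
        intro ξ; ring
      calc (∫ ξ in (0:ℝ)..α,
              (1 - Real.exp (-2 * h * ξ)) * (c / α) / (2 * h - c * ξ / α))
          = ∫ ξ in (0:ℝ)..α,
              ((c / α) / (2 * h - c * ξ / α)
                - Real.exp (-2 * h * ξ) * (c / α) / (2 * h - c * ξ / α)) := by
            simp_rw [hsplit]
        _ = L - E α := by
            rw [intervalIntegral.integral_sub hgint heint, hmain]
    · -- error bound
      have habs : |E α| ≤ ∫ ξ in (0:ℝ)..α,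
          |Real.exp (-2 * h * ξ) * (c / α) / (2 * h - c * ξ / α)| :=
        intervalIntegral.abs_integral_le_integral_abs hα.le
      have hbound : ∀ ξ ∈ Set.Icc (0:ℝ) α,
          |Real.exp (-2 * h * ξ) * (c / α) / (2 * h - c * ξ / α)|
            ≤ (K / α) * Real.exp (-2 * h * ξ) := by
        intro ξ hξ
        have hd := hden α hα ξ hξ
        have hdpos : 0 < 2 * h - c * ξ / α := lt_of_lt_of_le (by linarith) hd
        rw [abs_div, abs_mul, abs_of_pos hdpos, Real.abs_exp, abs_div,
          abs_of_pos hα]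
        rw [div_le_iff₀ hdpos]
        have h1 : Real.exp (-2 * h * ξ) * (|c| / α)
            ≤ (K / α) * Real.exp (-2 * h * ξ) * (2 * m) := by
          rw [hK]
          have he : 0 < Real.exp (-2 * h * ξ) := Real.exp_pos _
          rw [show |c| / (2 * m) / α * Real.exp (-2 * h * ξ) * (2 * m)
              = Real.exp (-2 * h * ξ) * (|c| / α) * ((2 * m) / (2 * m)) by ring]
          rw [div_self (by linarith : (2:ℝ) * m ≠ 0), mul_one]
        calc Real.exp (-2 * h * ξ) * (|c| / α)
            ≤ (K / α) * Real.exp (-2 * h * ξ) * (2 * m) := h1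
          _ ≤ (K / α) * Real.exp (-2 * h * ξ) * (2 * h - c * ξ / α) := by
              apply mul_le_mul_of_nonneg_left hd
              positivity
      have hexpint : IntervalIntegrable (fun ξ : ℝ => (K / α) * Real.exp (-2 * h * ξ))
          MeasureTheory.volume 0 α := (by fun_prop : Continuous _).intervalIntegrable _ _
      have hmono : (∫ ξ in (0:ℝ)..α,
            |Real.exp (-2 * h * ξ) * (c / α) / (2 * h - c * ξ / α)|)
          ≤ ∫ ξ in (0:ℝ)..α, (K / α) * Real.exp (-2 * h * ξ) := by
        apply intervalIntegral.integral_mono_on hα.le _ hexpint hbound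
        exact heint.abs
      have hexpval : (∫ ξ in (0:ℝ)..α, Real.exp (-2 * h * ξ))
          = (1 - Real.exp (-2 * h * α)) / (2 * h) := by
        have hder : ∀ ξ ∈ Set.uIcc (0:ℝ) α,
            HasDerivAt (fun ξ : ℝ => -Real.exp (-2 * h * ξ) / (2 * h))
              (Real.exp (-2 * h * ξ)) ξ := by
          intro ξ _
          have hu : HasDerivAt (fun ξ : ℝ => -2 * h * ξ) (-2 * h) ξ := by
            simpa using (hasDerivAt_id ξ).const_mul (-2 * h)
          have := ((hu.exp).neg).div_const (2 * h)
          exact this.congr_deriv (by field_simp)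
        rw [intervalIntegral.integral_eq_sub_of_hasDerivAt hder
          ((by fun_prop : Continuous _).intervalIntegrable _ _)]
        simp
        ring
      have hexpint2 : (∫ ξ in (0:ℝ)..α, (K / α) * Real.exp (-2 * h * ξ))
          ≤ K / (2 * h) / α := by
        rw [intervalIntegral.integral_const_mul, hexpval]
        have he1 : (1 - Real.exp (-2 * h * α)) / (2 * h) ≤ 1 / (2 * h) := by
          apply div_le_div_of_nonneg_right _ (by linarith)
          have := Real.exp_pos (-2 * h * α)
          linarith
        calc K / α * ((1 - Real.exp (-2 * h * α)) / (2 * h))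
            ≤ K / α * (1 / (2 * h)) := by
              apply mul_le_mul_of_nonneg_left he1 (by positivity)
          _ = K / (2 * h) / α := by ring
      linarith
  -- error tends to zero
  have hE0 : Tendsto E atTop (nhds 0) := by
    apply squeeze_zero_norm' (a := fun α => K / (2 * h) / α)
    · filter_upwards [eventually_gt_atTop 0] with α hα
      exact (key α hα).2
    · have : Tendsto (fun α : ℝ => K / (2 * h) / α) atTop (nhds 0) :=
        Tendsto.div_atTop tendsto_const_nhds tendsto_id
      exact this
  have hfinal : Tendsto (fun α : ℝ => L - E α) atTop (nhds L) := by
    have h2 := hE0.const_sub L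
    simpa using h2
  apply hfinal.congr'
  filter_upwards [eventually_gt_atTop 0] with α hα
  exact ((key α hα).1).symm
end
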